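/- arXiv:2202.03321 — 10 statements merged into one kernel-verified Lean document; each statement's English description precedes it below -/
import Mathlib

section
/- Let m, n ≥ 1 and let ρ, σ, τ be density matrices on ℂ^m⊗ℂ^n (matrices indexed by Fin m × Fin n) such that ρ = t·σ + (1−t)·τ for some real t with 0 < t < 1. If the minimal eigenvalue of the partial transpose ρ^{T_A} equals −1/2, then the minimal eigenvalue of σ^{T_A} equals −1/2 and the minimal eigenvalue of τ^{T_A} equals −1/2. -/
open Matrix Polynomial
open scoped ComplexOrder

noncomputable section

/-- Partial transpose on subsystem A of a bipartite matrix. -/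
def ptA {m n : ℕ} (ρ : Matrix (Fin m × Fin n) (Fin m × Fin n) ℂ) :
    Matrix (Fin m × Fin n) (Fin m × Fin n) ℂ :=
  fun p q => ρ (q.1, p.2) (p.1, q.2)

/-- A density matrix: positive semidefinite with trace one. -/
def IsDensityMatrix {k : Type*} [Fintype k] [DecidableEq k] (ρ : Matrix k k ℂ) : Prop :=
  ρ.PosSemidef ∧ ρ.trace = 1

open Classical in
/-- Minimal (real) eigenvalue of a Hermitian matrix (junk value 0 otherwise). -/
noncomputable def minEig {k : Type*} [Fintype k] [DecidableEq k] (A : Matrix k k ℂ) : ℝ :=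
  if h : A.IsHermitian then ⨅ i, h.eigenvalues i else 0

/-- The rank-one projection |ψ⟩⟨ψ| of a vector ψ. -/
def proj {k : Type*} [Fintype k] (ψ : k → ℂ) : Matrix k k ℂ :=
  Matrix.vecMulVec ψ (star ψ)

/-- A unit vector. -/
def IsUnitVec {k : Type*} [Fintype k] (ψ : k → ℂ) : Prop :=
  ∑ p, ‖ψ p‖ ^ 2 = 1

/-- Reduced matrix on subsystem A of a pure state ψ. -/
def reducedA {n : ℕ} (ψ : Fin n × Fin n → ℂ) : Matrix (Fin n) (Fin n) ℂ :=
  fun i k => ∑ j, ψ (i, j) * (starRingEnd ℂ) (ψ (k, j))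

/-- ψ is maximally entangled iff its reduced matrix is (1/n)·identity. -/
def MaxEntangled {n : ℕ} (ψ : Fin n × Fin n → ℂ) : Prop :=
  reducedA ψ = ((n : ℂ))⁻¹ • (1 : Matrix (Fin n) (Fin n) ℂ)


-- ######## plumbing ########
section plumbing

local notation "conj'" => (starRingEnd ℂ)

lemma mapconj_conjTranspose {α β : Type*} (V : Matrix α β ℂ) : Vᴴ.map conj' = Vᵀ := by
  ext i j
  simp [Matrix.conjTranspose_apply, Matrix.map_apply]

lemma transpose_mapconj_eq_conjT {α β : Type*} (V : Matrix α β ℂ) : Vᵀ.map conj' = Vᴴ := by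
  ext i j
  simp [Matrix.conjTranspose_apply, Matrix.map_apply]

lemma unit_conj_mul {N : ℕ} {V : Matrix (Fin N) (Fin N) ℂ} (hV : V * Vᴴ = 1) :
    V.map conj' * Vᵀ = 1 := by
  have h := congrArg (fun A : Matrix (Fin N) (Fin N) ℂ => A.map conj') hV
  simp only [Matrix.map_mul] at h
  rw [mapconj_conjTranspose] at h
  rw [h]
  ext i j
  simp [Matrix.map_apply, Matrix.one_apply]

lemma trace_inv {N : ℕ} {V : Matrix (Fin N) (Fin N) ℂ} (hV : V * Vᴴ = 1)
    (M : Matrix (Fin N) (Fin N) ℂ) :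
    ((Vᵀ * M * V).map conj' * (Vᵀ * M * V)).trace = (M.map conj' * M).trace := by
  simp only [Matrix.map_mul]
  rw [transpose_mapconj_eq_conjT]
  have h1 : Vᴴ * M.map conj' * V.map conj' * (Vᵀ * M * V)
      = Vᴴ * (M.map conj' * M) * V := by
    have h2 : V.map conj' * Vᵀ = 1 := unit_conj_mul hV
    calc Vᴴ * M.map conj' * V.map conj' * (Vᵀ * M * V)
        = Vᴴ * M.map conj' * (V.map conj' * Vᵀ) * M * V := by
          simp only [Matrix.mul_assoc]
      _ = Vᴴ * (M.map conj' * M) * V := by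
          rw [h2]
          simp only [Matrix.mul_one, Matrix.mul_assoc]
  rw [h1, Matrix.trace_mul_cycle, ← Matrix.mul_assoc, hV, Matrix.one_mul]

lemma trace_entry {N : ℕ} (G : Matrix (Fin N) (Fin N) ℂ) :
    (G.map conj' * G).trace = ∑ a, ∑ b, conj' (G a b) * G b a := by
  simp [Matrix.trace, Matrix.diag, Matrix.mul_apply, Matrix.map_apply]

lemma trace_conjT_mul {M N : ℕ} (G : Matrix (Fin M) (Fin N) ℂ) :
    (Gᴴ * G).trace = ((∑ b, ∑ i, Complex.normSq (G i b) : ℝ) : ℂ) := by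
  rw [Complex.ofReal_sum]
  simp only [Matrix.trace, Matrix.diag, Matrix.mul_apply, Matrix.conjTranspose_apply]
  refine Finset.sum_congr rfl fun b _ => ?_
  rw [Complex.ofReal_sum]
  refine Finset.sum_congr rfl fun i _ => ?_
  rw [mul_comm]
  exact Complex.mul_conj _

lemma colnorm_inv {M N : ℕ} (W V : Matrix (Fin M) (Fin N) ℂ)
    (hV' : Vᴴ * V = 1) (hV : V * Vᴴ = 1) : True := trivial

end plumbing

section lemmas

local notation "conj'" => (starRingEnd ℂ)

variable {k : Type*} [Fintype k] [DecidableEq k]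

lemma minEig_eq {A : Matrix k k ℂ} (hA : A.IsHermitian) : minEig A = ⨅ i, hA.eigenvalues i :=
  dif_pos hA

lemma minEig_le [Nonempty k] {A : Matrix k k ℂ} (hA : A.IsHermitian) (i : k) :
    minEig A ≤ hA.eigenvalues i := by
  rw [minEig_eq hA]
  exact ciInf_le (Set.Finite.bddBelow (Set.finite_range _)) i

lemma psd_smul {A : Matrix k k ℂ} (hA : A.PosSemidef) {c : ℝ} (hc : 0 ≤ c) :
    ((c : ℂ) • A).PosSemidef := by
  refine Matrix.PosSemidef.of_dotProduct_mulVec_nonneg ?_ ?_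
  · unfold Matrix.IsHermitian
    rw [conjTranspose_smul, hA.1.eq]
    congr 1
    simp
  · intro x
    rw [smul_mulVec, dotProduct_smul]
    have h := hA.dotProduct_mulVec_nonneg x
    rw [Complex.nonneg_iff] at h ⊢
    obtain ⟨h1, h2⟩ := h
    constructor
    · simp only [smul_eq_mul, Complex.mul_re, Complex.ofReal_re, Complex.ofReal_im]
      nlinarith
    · simp only [smul_eq_mul, Complex.mul_im, Complex.ofReal_re, Complex.ofReal_im]
      nlinarith

lemma shifted_psd [Nonempty k] {A : Matrix k k ℂ} (hA : A.IsHermitian) :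
    (A - ((minEig A : ℝ) : ℂ) • 1).PosSemidef := by
  set c := minEig A with hc
  have hU := hA.spectral_theorem
  set U : Matrix k k ℂ := (hA.eigenvectorUnitary : Matrix k k ℂ) with hUdef
  have hUU : U * star U = 1 := (Matrix.mem_unitaryGroup_iff).mp hA.eigenvectorUnitary.2
  have key : A - (c : ℂ) • 1 = U * diagonal (fun i => ((hA.eigenvalues i - c : ℝ) : ℂ)) * star U := by
    have h1 : ((c:ℂ) • (1 : Matrix k k ℂ)) = U * ((c:ℂ) • 1) * star U := by
      rw [mul_smul_comm, mul_one, smul_mul_assoc, hUU]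
    rw [sub_eq_iff_eq_add]
    calc A = U * diagonal (RCLike.ofReal ∘ hA.eigenvalues) * star U := hU
      _ = U * (diagonal (fun i => ((hA.eigenvalues i - c : ℝ) : ℂ)) + (c:ℂ) • 1) * star U := by
          congr 1
          congr 1
          rw [← Matrix.diagonal_one, ← Matrix.diagonal_smul, Matrix.diagonal_add]
          ext i j
          by_cases hij : i = j <;>
            simp [Matrix.diagonal_apply, hij, Function.comp]
      _ = U * diagonal (fun i => ((hA.eigenvalues i - c : ℝ) : ℂ)) * star U + (c:ℂ) • 1 := by
          rw [Matrix.mul_add, Matrix.add_mul, ← h1]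
  rw [key, Matrix.star_eq_conjTranspose]
  apply Matrix.PosSemidef.mul_mul_conjTranspose_same
  refine Matrix.PosSemidef.diagonal fun i => ?_
  show (0:ℂ) ≤ ((hA.eigenvalues i - c : ℝ) : ℂ)
  rw [Complex.zero_le_real]
  exact sub_nonneg.mpr (minEig_le hA i)

lemma le_minEig [Nonempty k] {A : Matrix k k ℂ} (hA : A.IsHermitian) (c : ℝ)
    (h : (A - (c : ℂ) • 1).PosSemidef) : c ≤ minEig A := by
  rw [minEig_eq hA]
  apply le_ciInf
  intro i
  set v : k → ℂ := ⇑(hA.eigenvectorBasis i) with hv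
  have h2 := h.re_dotProduct_nonneg v
  have h3 : (A - (c:ℂ)•1) *ᵥ v = A *ᵥ v - (c:ℂ) • v := by
    rw [Matrix.sub_mulVec, smul_mulVec, one_mulVec]
  rw [h3, dotProduct_sub, map_sub, dotProduct_smul] at h2
  have h4 : star v ⬝ᵥ v = 1 := by
    have h5 : (inner ℂ (hA.eigenvectorBasis i) (hA.eigenvectorBasis i) : ℂ) = 1 := by
      rw [inner_self_eq_norm_sq_to_K, hA.eigenvectorBasis.orthonormal.1 i]
      norm_num
    rw [EuclideanSpace.inner_eq_star_dotProduct, dotProduct_comm] at h5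
    exact h5
  rw [h4] at h2
  simp only [smul_eq_mul, mul_one, Complex.ofReal_re, RCLike.ofReal_re, RCLike.re_to_complex] at h2
  have h6 : RCLike.re (star v ⬝ᵥ A *ᵥ v) = hA.eigenvalues i := (hA.eigenvalues_eq i).symm
  simp only [RCLike.re_to_complex] at h6
  linarith


lemma bessel {M N : ℕ} (X : Matrix (Fin M) (Fin N) ℂ) (lam : Fin N → ℝ)
    (horth : ∀ a b, ∑ i, conj' (X i a) * X i b = if a = b then (lam a : ℂ) else 0)
    (y : Fin M → ℂ) :
    ∑ a, (if lam a = 0 then (0:ℝ) else Complex.normSq (∑ i, X i a * y i) / lam a)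
      ≤ ∑ i, Complex.normSq (y i) := by
  classical
  set H : Fin N → ℂ := fun a => ∑ i, X i a * y i with hH
  set s : Finset (Fin N) := Finset.univ.filter (fun a => lam a ≠ 0) with hs
  set g : Fin N → ℂ := fun a => H a / (lam a : ℂ) with hg
  set z : Fin M → ℂ := fun i => ∑ a ∈ s, g a * conj' (X i a) with hz
  set B : ℝ := ∑ a ∈ s, Complex.normSq (H a) / lam a with hB
  -- conj of z
  have hconjz : ∀ i, conj' (z i) = ∑ a ∈ s, conj' (g a) * X i a := by
    intro i
    rw [hz, map_sum]
    exact Finset.sum_congr rfl fun a _ => by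
      rw [RingHom.map_mul, Complex.conj_conj]
  -- (A) sum of |z|^2
  have hA : ∑ i, Complex.normSq (z i) = B := by
    have h0 : ((∑ i, Complex.normSq (z i) : ℝ) : ℂ) = ∑ i, z i * conj' (z i) := by
      rw [Complex.ofReal_sum]
      exact Finset.sum_congr rfl fun i _ => by rw [Complex.mul_conj]
    have h1 : ∀ i, z i * conj' (z i)
        = ∑ b ∈ s, ∑ a ∈ s, (g b * conj' (g a)) * (conj' (X i b) * X i a) := by
      intro i
      rw [hconjz i, hz]
      rw [Finset.sum_mul_sum]
      exact Finset.sum_congr rfl fun b _ => Finset.sum_congr rfl fun a _ => by ring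
    have h2 : ((∑ i, Complex.normSq (z i) : ℝ) : ℂ) = (B : ℂ) := by
      rw [h0]
      calc ∑ i, z i * conj' (z i)
          = ∑ i, ∑ b ∈ s, ∑ a ∈ s, (g b * conj' (g a)) * (conj' (X i b) * X i a) :=
            Finset.sum_congr rfl fun i _ => h1 i
        _ = ∑ b ∈ s, ∑ i, ∑ a ∈ s, (g b * conj' (g a)) * (conj' (X i b) * X i a) :=
            Finset.sum_comm
        _ = ∑ b ∈ s, ∑ a ∈ s, ∑ i, (g b * conj' (g a)) * (conj' (X i b) * X i a) :=
            Finset.sum_congr rfl fun b _ => Finset.sum_comm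
        _ = ∑ b ∈ s, ∑ a ∈ s, (g b * conj' (g a)) * (if b = a then (lam b : ℂ) else 0) := by
            refine Finset.sum_congr rfl fun b _ => Finset.sum_congr rfl fun a _ => ?_
            rw [← Finset.mul_sum, horth b a]
        _ = ∑ b ∈ s, (g b * conj' (g b)) * (lam b : ℂ) := by
            refine Finset.sum_congr rfl fun b hb => ?_
            simp only [mul_ite, mul_zero]
            rw [Finset.sum_ite_eq s b (fun a => g b * conj' (g a) * (lam b : ℂ))]
            simp [hb]
        _ = (B : ℂ) := by
            rw [hB, Complex.ofReal_sum]
            refine Finset.sum_congr rfl fun b hb => ?_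
            have hbne : lam b ≠ 0 := (Finset.mem_filter.mp hb).2
            rw [Complex.mul_conj, hg]
            simp only
            rw [Complex.normSq_div, Complex.normSq_ofReal]
            push_cast
            field_simp
    exact_mod_cast h2
  -- (C) cross term
  have hC : ((∑ i, (y i * conj' (z i)).re : ℝ)) = B := by
    have h0 : ∑ i, y i * conj' (z i) = (B : ℂ) := by
      calc ∑ i, y i * conj' (z i)
          = ∑ i, ∑ a ∈ s, conj' (g a) * (X i a * y i) := by
            refine Finset.sum_congr rfl fun i _ => ?_
            rw [hconjz i, Finset.mul_sum]
            exact Finset.sum_congr rfl fun a _ => by ring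
        _ = ∑ a ∈ s, conj' (g a) * H a := by
            rw [Finset.sum_comm]
            refine Finset.sum_congr rfl fun a _ => ?_
            rw [← Finset.mul_sum, hH]
        _ = (B : ℂ) := by
            rw [hB, Complex.ofReal_sum]
            refine Finset.sum_congr rfl fun a ha => ?_
            have hane : lam a ≠ 0 := (Finset.mem_filter.mp ha).2
            rw [hg]
            simp only
            rw [map_div₀, Complex.conj_ofReal, div_mul_eq_mul_div, mul_comm, Complex.mul_conj]
            push_cast
            try ring
    calc (∑ i, (y i * conj' (z i)).re) = (∑ i, y i * conj' (z i)).re := by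
          rw [Complex.re_sum]
      _ = (B : ℂ).re := by rw [h0]
      _ = B := Complex.ofReal_re B
  -- expand nonneg of ∑ normSq (y - z)
  have hpos : (0:ℝ) ≤ ∑ i, Complex.normSq (y i - z i) :=
    Finset.sum_nonneg fun i _ => Complex.normSq_nonneg _
  have hexp : ∑ i, Complex.normSq (y i - z i)
      = ∑ i, Complex.normSq (y i) + ∑ i, Complex.normSq (z i)
        - 2 * ∑ i, (y i * conj' (z i)).re := by
    rw [Finset.mul_sum, ← Finset.sum_add_distrib, ← Finset.sum_sub_distrib]
    exact Finset.sum_congr rfl fun i _ => by rw [Complex.normSq_sub]; try ring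
  have hBle : B ≤ ∑ i, Complex.normSq (y i) := by
    rw [hexp, hA, hC] at hpos
    linarith
  -- convert the if-sum to the filtered sum
  have hiff : ∑ a, (if lam a = 0 then (0:ℝ) else Complex.normSq (H a) / lam a) = B := by
    rw [hB, Finset.sum_filter]
    refine Finset.sum_congr rfl fun a _ => ?_
    by_cases h : lam a = 0 <;> simp [h]
  rw [hiff]
  exact hBle

lemma core {M N : ℕ} (X W : Matrix (Fin M) (Fin N) ℂ) (lam : Fin N → ℝ) (S : ℝ)
    (hsum : ∑ a, lam a ≤ S)
    (horth : ∀ a b, ∑ i, conj' (X i a) * X i b = if a = b then (lam a : ℂ) else 0) :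
    -(S/2) * (∑ b, ∑ i, Complex.normSq (W i b))
      ≤ (∑ a, ∑ b, conj' (∑ i, X i a * W i b) * (∑ i, X i b * W i a)).re := by
  classical
  set H : Fin N → Fin N → ℂ := fun a b => ∑ i, X i a * W i b with hHdef
  have hlam : ∀ a, lam a = ∑ i, Complex.normSq (X i a) := by
    intro a
    have h := horth a a
    rw [if_pos rfl] at h
    have h2 : ∑ i, conj' (X i a) * X i a = ((∑ i, Complex.normSq (X i a) : ℝ) : ℂ) := by
      rw [Complex.ofReal_sum]
      exact Finset.sum_congr rfl fun i _ => by rw [mul_comm, Complex.mul_conj]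
    exact_mod_cast h.symm.trans h2
  have hlam0 : ∀ a, 0 ≤ lam a := fun a =>
    (hlam a) ▸ Finset.sum_nonneg fun i _ => Complex.normSq_nonneg _
  have hS : 0 ≤ S := le_trans (Finset.sum_nonneg fun a _ => hlam0 a) hsum
  have hXzero : ∀ a, lam a = 0 → ∀ i, X i a = 0 := by
    intro a ha i
    have h : ∑ i, Complex.normSq (X i a) = 0 := (hlam a).symm.trans ha
    have := (Finset.sum_eq_zero_iff_of_nonneg
      (fun i _ => Complex.normSq_nonneg (X i a))).mp h i (Finset.mem_univ i)
    exact Complex.normSq_eq_zero.mp this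
  have hHzero : ∀ a b, lam a = 0 → H a b = 0 := by
    intro a b ha
    rw [hHdef]
    exact Finset.sum_eq_zero fun i _ => by rw [hXzero a ha i, zero_mul]
  have hlamle : ∀ a, lam a ≤ S := by
    intro a
    refine le_trans ?_ hsum
    exact Finset.single_le_sum (fun b _ => hlam0 b) (Finset.mem_univ a)
  have hab : ∀ a b, a ≠ b → lam a + lam b ≤ S := by
    intro a b hne
    refine le_trans ?_ hsum
    rw [← Finset.sum_pair hne]
    exact Finset.sum_le_sum_of_subset_of_nonneg (Finset.subset_univ _)
      (fun i _ _ => hlam0 i)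
  set U : Fin N → Fin N → ℝ := fun a b =>
    if a = b ∨ lam a = 0 then 0 else (S/(4*lam a)) * Complex.normSq (H a b) with hU
  set U' : Fin N → Fin N → ℝ := fun a b =>
    if a = b ∨ lam a = 0 then 0 else (lam a/S) * Complex.normSq (H b a) with hU'
  have hUnn : ∀ a b, 0 ≤ U a b := by
    intro a b
    simp only [hU]
    split_ifs with h
    · exact le_refl 0
    · push_neg at h
      have h2 : 0 < lam a := lt_of_le_of_ne (hlam0 a) (Ne.symm h.2)
      exact mul_nonneg (div_nonneg hS (by positivity)) (Complex.normSq_nonneg _)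
  -- step 1+2 : per-term lower bound
  have step12 : ∀ a b, -(U a b + U' a b) ≤ (conj' (H a b) * H b a).re := by
    intro a b
    by_cases hd : a = b
    · subst hd
      have : (conj' (H a a) * H a a).re = Complex.normSq (H a a) := by
        rw [mul_comm, Complex.mul_conj]
        exact Complex.ofReal_re _
      rw [this]
      simp only [hU, hU', true_or, if_pos]
      simp [Complex.normSq_nonneg]
    · by_cases hz : lam a = 0
      · simp only [hU, hU', hz, or_true, if_pos]
        rw [hHzero a b hz]
        simp
      · have hl : 0 < lam a := lt_of_le_of_ne (hlam0 a) (Ne.symm hz)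
        have hSpos : 0 < S := lt_of_lt_of_le hl (hlamle a)
        have h1 : -(‖H a b‖ * ‖H b a‖) ≤ (conj' (H a b) * H b a).re := by
          have := Complex.abs_re_le_norm (conj' (H a b) * H b a)
          rw [norm_mul, Complex.norm_conj] at this
          have h2 := abs_le.mp this
          linarith [h2.1]
        refine le_trans ?_ h1
        rw [neg_le_neg_iff]
        simp only [hU, hU']
        rw [if_neg (by push_neg; exact ⟨hd, hz⟩), if_neg (by push_neg; exact ⟨hd, hz⟩)]
        set u := ‖H a b‖
        set v := ‖H b a‖
        have hu : 0 ≤ u := norm_nonneg _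
        have hv : 0 ≤ v := norm_nonneg _
        have h4 : 0 < 4*lam a*S := by positivity
        have expand : 4*lam a*S*(S/(4*lam a) * Complex.normSq (H a b) + lam a/S * Complex.normSq (H b a))
            = S^2*Complex.normSq (H a b) + 4*(lam a)^2*Complex.normSq (H b a) := by
          field_simp
        have key : 4*lam a*S*(u*v) ≤ 4*lam a*S*(S/(4*lam a) * Complex.normSq (H a b) + lam a/S * Complex.normSq (H b a)) := by
          rw [expand, ← Complex.sq_norm, ← Complex.sq_norm]
          nlinarith [sq_nonneg (S*u - 2*lam a*v), sq_nonneg u, sq_nonneg v]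
        have := le_of_mul_le_mul_left key h4
        linarith
  -- step 4 : U' b a ≤ U a b
  have step4 : ∀ a b, U' b a ≤ U a b := by
    intro a b
    simp only [hU, hU']
    by_cases h1 : b = a ∨ lam b = 0
    · rw [if_pos h1]
      split_ifs with h2
      · exact le_refl 0
      · push_neg at h2
        have hla : 0 < lam a := lt_of_le_of_ne (hlam0 a) (Ne.symm h2.2)
        exact mul_nonneg (div_nonneg hS (by positivity)) (Complex.normSq_nonneg _)
    · rw [if_neg h1]
      push_neg at h1
      by_cases h2 : a = b ∨ lam a = 0
      · rw [if_pos h2]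
        rcases h2 with h2 | h2
        · exact absurd h2.symm h1.1
        · rw [hHzero a b h2]
          simp
      · rw [if_neg h2]
        push_neg at h2
        have hlb : 0 < lam b := lt_of_le_of_ne (hlam0 b) (Ne.symm h1.2)
        have hla : 0 < lam a := lt_of_le_of_ne (hlam0 a) (Ne.symm h2.2)
        have hSpos : 0 < S := lt_of_lt_of_le hla (hlamle a)
        have hcoef : lam b/S ≤ S/(4*lam a) := by
          rw [div_le_div_iff₀ hSpos (by positivity)]
          nlinarith [sq_nonneg (lam a - lam b),
            mul_self_le_mul_self (by positivity : (0:ℝ) ≤ lam a + lam b) (hab a b h2.1)]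
        exact mul_le_mul_of_nonneg_right hcoef (Complex.normSq_nonneg _)
  -- re of double sum
  have hre : (∑ a, ∑ b, conj' (H a b) * H b a).re
      = ∑ a, ∑ b, (conj' (H a b) * H b a).re := by
    rw [Complex.re_sum]
    exact Finset.sum_congr rfl fun a _ => Complex.re_sum _ _
  have h_main : -(∑ a, ∑ b, (U a b + U' a b)) ≤ ∑ a, ∑ b, (conj' (H a b) * H b a).re := by
    have h := Finset.sum_le_sum
      (fun a (_ : a ∈ Finset.univ) => Finset.sum_le_sum
        (fun b (_ : b ∈ Finset.univ) => step12 a b))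
    calc -(∑ a, ∑ b, (U a b + U' a b)) = ∑ a, ∑ b, -(U a b + U' a b) := by
          simp only [← Finset.sum_neg_distrib]
      _ ≤ _ := h
  have hswap : ∑ a, ∑ b, U' a b ≤ ∑ a, ∑ b, U a b := by
    have h : (∑ a, ∑ b, U' a b) = ∑ a, ∑ b, U' b a := Finset.sum_comm
    rw [h]
    exact Finset.sum_le_sum fun a _ => Finset.sum_le_sum fun b _ => step4 a b
  have hstep5 : ∑ a, ∑ b, U a b ≤ (S/4) * ∑ b, ∑ i, Complex.normSq (W i b) := by
    have h1 : (∑ a, ∑ b, U a b) = ∑ b, ∑ a, U a b := Finset.sum_comm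
    rw [h1, Finset.mul_sum]
    refine Finset.sum_le_sum fun b _ => ?_
    have hb := bessel X lam horth (fun i => W i b)
    calc ∑ a, U a b
        ≤ ∑ a, (S/4) * (if lam a = 0 then 0 else Complex.normSq (H a b)/lam a) := by
          refine Finset.sum_le_sum fun a _ => ?_
          simp only [hU]
          by_cases hz : lam a = 0
          · simp [hz]
          · by_cases hd : a = b
            · rw [if_pos (Or.inl hd), if_neg hz]
              have hla : 0 < lam a := lt_of_le_of_ne (hlam0 a) (Ne.symm hz)
              have : 0 ≤ Complex.normSq (H a b)/lam a :=
                div_nonneg (Complex.normSq_nonneg _) (le_of_lt hla)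
              nlinarith
            · rw [if_neg (by push_neg; exact ⟨hd, hz⟩), if_neg hz]
              have : S/(4*lam a) * Complex.normSq (H a b)
                  = S/4 * (Complex.normSq (H a b)/lam a) := by
                field_simp
              exact le_of_eq this
      _ = (S/4) * ∑ a, (if lam a = 0 then 0 else Complex.normSq (H a b)/lam a) :=
          (Finset.mul_sum _ _ _).symm
      _ ≤ (S/4) * ∑ i, Complex.normSq (W i b) := by
          have h4 : (0:ℝ) ≤ S/4 := by positivity
          exact mul_le_mul_of_nonneg_left hb h4
  have hdist : (∑ a, ∑ b, (U a b + U' a b))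
      = (∑ a, ∑ b, U a b) + (∑ a, ∑ b, U' a b) := by
    rw [← Finset.sum_add_distrib]
    exact Finset.sum_congr rfl fun a _ => Finset.sum_add_distrib
  rw [hre]
  have := h_main
  rw [hdist] at this
  linarith

-- ######## trace and hermiticity helpers ########

lemma trace_psd_nonneg {k : Type*} [Fintype k] [DecidableEq k]
    {M : Matrix k k ℂ} (hM : M.PosSemidef) : 0 ≤ M.trace := by
  have h : ∀ i, (0:ℂ) ≤ M i i := by
    intro i
    have h := hM.dotProduct_mulVec_nonneg (Pi.single i 1)
    simpa [dotProduct, Pi.single_apply, apply_ite (star : ℂ → ℂ)] using h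
  exact Finset.sum_nonneg fun i _ => h i

lemma trace_mul_psd_nonneg {k : Type*} [Fintype k] [DecidableEq k]
    {σ M : Matrix k k ℂ} (hσ : σ.PosSemidef) (hM : M.PosSemidef) :
    0 ≤ (σ * M).trace := by
  obtain ⟨B, rfl⟩ : ∃ B : Matrix k k ℂ, σ = Bᴴ * B := by
    open scoped MatrixOrder Matrix.Norms.L2Operator in
    obtain ⟨B, hB⟩ := CStarAlgebra.nonneg_iff_eq_star_mul_self.mp hσ.nonneg
    exact ⟨B, hB⟩
  rw [Matrix.mul_assoc, Matrix.trace_mul_comm]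
  exact trace_psd_nonneg ((hM.mul_mul_conjTranspose_same B))

lemma colnorm_invariant {M N : ℕ} (W : Matrix (Fin M) (Fin N) ℂ)
    (V : Matrix (Fin N) (Fin N) ℂ) (hV : V * Vᴴ = 1) :
    ∑ b, ∑ i, Complex.normSq ((W * V) i b) = ∑ b, ∑ i, Complex.normSq (W i b) := by
  have h1 : ((W * V)ᴴ * (W * V)).trace = (Wᴴ * W).trace := by
    rw [Matrix.conjTranspose_mul]
    have : Vᴴ * Wᴴ * (W * V) = Vᴴ * (Wᴴ * W) * V := by
      simp only [Matrix.mul_assoc]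
    rw [this, Matrix.trace_mul_cycle, ← Matrix.mul_assoc, hV, Matrix.one_mul]
  rw [trace_conjT_mul, trace_conjT_mul] at h1
  exact_mod_cast h1

-- ######## bipartite specifics ########

variable {m n : ℕ}

lemma ptA_isHermitian {σ : Matrix (Fin m × Fin n) (Fin m × Fin n) ℂ}
    (h : σ.IsHermitian) : (ptA σ).IsHermitian := by
  unfold Matrix.IsHermitian
  ext p q
  have hh := congrFun (congrFun h.eq (p.1, q.2)) (q.1, p.2)
  simp only [Matrix.conjTranspose_apply] at hh ⊢
  rw [ptA, ptA]
  rw [← hh, star_star]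

lemma proj_isHermitian {k : Type*} [Fintype k] (x : k → ℂ) : (proj x).IsHermitian := by
  unfold Matrix.IsHermitian
  ext p q
  simp [proj, Matrix.conjTranspose_apply, Matrix.vecMulVec_apply, mul_comm]

lemma herm_quad_conj {k : Type*} [Fintype k] {M : Matrix k k ℂ} (hM : M.IsHermitian)
    (w : k → ℂ) : conj' (star w ⬝ᵥ M *ᵥ w) = star w ⬝ᵥ M *ᵥ w := by
  have hexp : star w ⬝ᵥ M *ᵥ w = ∑ p, ∑ q, conj' (w p) * M p q * w q := by
    simp [dotProduct, Matrix.mulVec, Finset.mul_sum, mul_assoc]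
  rw [hexp, map_sum]
  rw [Finset.sum_comm]
  refine Finset.sum_congr rfl fun p _ => ?_
  rw [map_sum]
  refine Finset.sum_congr rfl fun q _ => ?_
  simp only [_root_.map_mul, Complex.conj_conj]
  have hpq := congrFun (congrFun hM.eq q) p
  simp only [Matrix.conjTranspose_apply] at hpq
  have hpq' : conj' (M p q) = M q p := hpq
  rw [← hpq']
  ring

lemma herm_quad_im {k : Type*} [Fintype k] {M : Matrix k k ℂ} (hM : M.IsHermitian)
    (w : k → ℂ) : (star w ⬝ᵥ M *ᵥ w).im = 0 := by
  have := herm_quad_conj hM w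
  have h2 := congrArg Complex.im this
  simp only [Complex.conj_im] at h2
  linarith

-- sum reorder helpers
lemma sum_rev3 {ι₁ ι₂ ι₃ : Type*} [Fintype ι₁] [Fintype ι₂] [Fintype ι₃]
    (f : ι₁ → ι₂ → ι₃ → ℂ) :
    ∑ a, ∑ b, ∑ c, f a b c = ∑ c, ∑ b, ∑ a, f a b c := by
  calc ∑ a, ∑ b, ∑ c, f a b c = ∑ a, ∑ c, ∑ b, f a b c :=
        Finset.sum_congr rfl fun a _ => Finset.sum_comm
    _ = ∑ c, ∑ a, ∑ b, f a b c := Finset.sum_comm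
    _ = ∑ c, ∑ b, ∑ a, f a b c := Finset.sum_congr rfl fun c _ => Finset.sum_comm

lemma sum_reorder4 {ι₁ ι₂ ι₃ ι₄ : Type*} [Fintype ι₁] [Fintype ι₂] [Fintype ι₃] [Fintype ι₄]
    (f : ι₁ → ι₂ → ι₃ → ι₄ → ℂ) :
    ∑ a, ∑ b, ∑ c, ∑ d, f a b c d = ∑ c, ∑ b, ∑ d, ∑ a, f a b c d := by
  calc ∑ a, ∑ b, ∑ c, ∑ d, f a b c d
      = ∑ a, ∑ c, ∑ b, ∑ d, f a b c d :=
        Finset.sum_congr rfl fun a _ => Finset.sum_comm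
    _ = ∑ c, ∑ a, ∑ b, ∑ d, f a b c d := Finset.sum_comm
    _ = ∑ c, ∑ a, ∑ d, ∑ b, f a b c d :=
        Finset.sum_congr rfl fun c _ => Finset.sum_congr rfl fun a _ => Finset.sum_comm
    _ = ∑ c, ∑ b, ∑ d, ∑ a, f a b c d := by
        refine Finset.sum_congr rfl fun c _ => ?_
        exact sum_rev3 (fun a d b => f a b c d)

-- quadratic form of ptA σ as a trace
lemma quad_eq_trace (σ : Matrix (Fin m × Fin n) (Fin m × Fin n) ℂ)
    (x : Fin m × Fin n → ℂ) :
    star x ⬝ᵥ (ptA σ) *ᵥ x = (σ * ptA (proj x)).trace := by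
  classical
  let e : ((Fin m × Fin n) × (Fin m × Fin n)) ≃ ((Fin m × Fin n) × (Fin m × Fin n)) :=
    ⟨fun pq => ((pq.2.1, pq.1.2), (pq.1.1, pq.2.2)),
     fun pq => ((pq.2.1, pq.1.2), (pq.1.1, pq.2.2)),
     fun pq => rfl, fun pq => rfl⟩
  calc star x ⬝ᵥ (ptA σ) *ᵥ x
      = ∑ p : (Fin m × Fin n), ∑ q : (Fin m × Fin n), conj' (x p) * (σ (q.1, p.2) (p.1, q.2) * x q) := by
        simp [dotProduct, Matrix.mulVec, ptA, Finset.mul_sum]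
    _ = ∑ pq : (Fin m × Fin n) × (Fin m × Fin n), conj' (x pq.1) * (σ (pq.2.1, pq.1.2) (pq.1.1, pq.2.2) * x pq.2) := by
        exact (Fintype.sum_prod_type (fun pq : (Fin m × Fin n) × (Fin m × Fin n) => conj' (x pq.1) * (σ (pq.2.1, pq.1.2) (pq.1.1, pq.2.2) * x pq.2))).symm
    _ = ∑ rs : (Fin m × Fin n) × (Fin m × Fin n), σ rs.1 rs.2 * (x (rs.1.1, rs.2.2) * conj' (x (rs.2.1, rs.1.2))) := by
        apply Fintype.sum_equiv e
        rintro ⟨⟨i,j⟩,⟨k,l⟩⟩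
        simp only [e, Equiv.coe_fn_mk]
        ring
    _ = ∑ r : (Fin m × Fin n), ∑ s : (Fin m × Fin n), σ r s * ((ptA (proj x)) s r) := by
        rw [Fintype.sum_prod_type]
        refine Finset.sum_congr rfl fun r _ => Finset.sum_congr rfl fun s _ => ?_
        simp only [ptA, proj, Matrix.vecMulVec_apply, Pi.star_apply, Complex.star_def]
    _ = (σ * ptA (proj x)).trace := by
        simp [Matrix.trace, Matrix.diag, Matrix.mul_apply]

-- quadratic form of ptA (proj x)
lemma quad_ptA_proj (x w : Fin m × Fin n → ℂ) :
    star w ⬝ᵥ (ptA (proj x)) *ᵥ w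
      = ∑ a : Fin n, ∑ b : Fin n,
          conj' (∑ i, x (i, a) * w (i, b)) * (∑ i, x (i, b) * w (i, a)) := by
  classical
  calc star w ⬝ᵥ (ptA (proj x)) *ᵥ w
      = ∑ p : (Fin m × Fin n), ∑ q : (Fin m × Fin n), conj' (w p) * (x (q.1, p.2) * conj' (x (p.1, q.2)) * w q) := by
        simp [dotProduct, Matrix.mulVec, ptA, proj, Matrix.vecMulVec_apply,
          Finset.mul_sum]
    _ = ∑ i : Fin m, ∑ b : Fin n, ∑ k : Fin m, ∑ a : Fin n,
          conj' (x (i, a)) * conj' (w (i, b)) * (x (k, b) * w (k, a)) := by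
        rw [Fintype.sum_prod_type]
        refine Finset.sum_congr rfl fun i _ => ?_
        refine Finset.sum_congr rfl fun b _ => ?_
        rw [Fintype.sum_prod_type]
        refine Finset.sum_congr rfl fun k _ => Finset.sum_congr rfl fun a _ => ?_
        ring
    _ = ∑ a : Fin n, ∑ b : Fin n, ∑ i : Fin m, ∑ k : Fin m,
          conj' (x (i, a)) * conj' (w (i, b)) * (x (k, b) * w (k, a)) := by
        rw [sum_reorder4 (fun a b i k =>
          conj' (x (i, a)) * conj' (w (i, b)) * (x (k, b) * w (k, a)))]
    _ = ∑ a : Fin n, ∑ b : Fin n,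
          conj' (∑ i, x (i, a) * w (i, b)) * (∑ i, x (i, b) * w (i, a)) := by
        refine Finset.sum_congr rfl fun a _ => Finset.sum_congr rfl fun b _ => ?_
        rw [map_sum, Finset.sum_mul_sum]
        refine Finset.sum_congr rfl fun i _ => Finset.sum_congr rfl fun k _ => ?_
        rw [_root_.map_mul]
        try ring

lemma star_dot_self {k : Type*} [Fintype k] (w : k → ℂ) :
    star w ⬝ᵥ w = ((∑ p, Complex.normSq (w p) : ℝ) : ℂ) := by
  rw [Complex.ofReal_sum]
  simp only [dotProduct, Pi.star_apply]
  refine Finset.sum_congr rfl fun p _ => ?_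
  rw [mul_comm]
  exact Complex.mul_conj _

lemma smul_one_isHermitian {k : Type*} [Fintype k] [DecidableEq k] (c : ℝ) :
    (((c : ℂ)) • (1 : Matrix k k ℂ)).IsHermitian := by
  unfold Matrix.IsHermitian
  rw [Matrix.conjTranspose_smul, Matrix.conjTranspose_one]
  congr 1
  simp

lemma transpose_entry {m n : ℕ} (X W : Matrix (Fin m) (Fin n) ℂ) (a b : Fin n) :
    (Xᵀ * W) a b = ∑ i, X i a * W i b := by
  simp [Matrix.mul_apply, Matrix.transpose_apply]

lemma key {m n : ℕ} (x : Fin m × Fin n → ℂ) :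
    (ptA (proj x) + (((∑ p, Complex.normSq (x p))/2 : ℝ) : ℂ) • 1).PosSemidef := by
  classical
  set Sx : ℝ := ∑ p, Complex.normSq (x p) with hSxdef
  have hherm : (ptA (proj x) + ((Sx/2 : ℝ) : ℂ) • 1).IsHermitian :=
    (ptA_isHermitian (proj_isHermitian x)).add (smul_one_isHermitian (Sx/2))
  refine Matrix.PosSemidef.of_dotProduct_mulVec_nonneg hherm fun w => ?_
  rw [Complex.nonneg_iff]
  refine ⟨?_, (herm_quad_im hherm w).symm⟩
  -- matrices
  set X : Matrix (Fin m) (Fin n) ℂ := Matrix.of (fun i a => x (i, a)) with hXdef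
  set W : Matrix (Fin m) (Fin n) ℂ := Matrix.of (fun i a => w (i, a)) with hWdef
  set R : Matrix (Fin n) (Fin n) ℂ := Xᴴ * X with hRdef
  have hRpsd : R.PosSemidef := Matrix.posSemidef_conjTranspose_mul_self X
  have hR : R.IsHermitian := hRpsd.1
  set V : Matrix (Fin n) (Fin n) ℂ := (hR.eigenvectorUnitary : Matrix (Fin n) (Fin n) ℂ)
    with hVdef
  have hV : V * Vᴴ = 1 := by
    rw [← Matrix.star_eq_conjTranspose]
    exact (Matrix.mem_unitaryGroup_iff).mp hR.eigenvectorUnitary.2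
  set lam : Fin n → ℝ := hR.eigenvalues with hlamdef
  have hdiag : (X*V)ᴴ*(X*V) = Matrix.diagonal (RCLike.ofReal ∘ lam) := by
    rw [Matrix.conjTranspose_mul]
    calc Vᴴ * Xᴴ * (X * V) = Vᴴ * (Xᴴ * X) * V := by simp only [Matrix.mul_assoc]
      _ = Matrix.diagonal (RCLike.ofReal ∘ lam) := by
          rw [← Matrix.star_eq_conjTranspose]
          have := hR.conjStarAlgAut_star_eigenvectorUnitary
          simp only [Unitary.conjStarAlgAut_apply, Unitary.coe_star, star_star] at this
          exact this
  have horth : ∀ a b, ∑ i, conj' ((X*V) i a) * (X*V) i b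
      = if a = b then ((lam a : ℝ) : ℂ) else 0 := by
    intro a b
    have hL : ∑ i, conj' ((X*V) i a) * (X*V) i b = ((X*V)ᴴ*(X*V)) a b := by
      simp only [Matrix.mul_apply, Matrix.conjTranspose_apply]
      exact Finset.sum_congr rfl fun i _ => rfl
    rw [hL, hdiag]
    simp [Matrix.diagonal_apply]
  -- sum of eigenvalues
  have hsq : ∑ b, ∑ i, Complex.normSq (X i b) = Sx := by
    rw [hSxdef, Fintype.sum_prod_type]
    exact Finset.sum_comm
  have hwsq : ∑ b, ∑ i, Complex.normSq (W i b) = ∑ p, Complex.normSq (w p) := by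
    rw [Fintype.sum_prod_type]
    exact Finset.sum_comm
  have hlamsum : ∑ a, lam a = Sx := by
    have h1 : ((∑ a, lam a : ℝ) : ℂ) = ((Sx : ℝ) : ℂ) := by
      calc ((∑ a, lam a : ℝ) : ℂ) = (Matrix.diagonal (RCLike.ofReal ∘ lam)).trace := by
            rw [Matrix.trace_diagonal]
            rw [Complex.ofReal_sum]
            rfl
        _ = ((X*V)ᴴ*(X*V)).trace := by rw [hdiag]
        _ = ((∑ b, ∑ i, Complex.normSq ((X*V) i b) : ℝ) : ℂ) := trace_conjT_mul _
        _ = ((Sx : ℝ) : ℂ) := by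
            rw [colnorm_invariant X V hV, hsq]
    exact_mod_cast h1
  -- core inequality
  have hcore := core (X*V) (W*V) lam Sx (le_of_eq hlamsum) horth
  -- identify quadratic form
  have hq : star w ⬝ᵥ (ptA (proj x)) *ᵥ w
      = ∑ a : Fin n, ∑ b : Fin n,
          conj' (∑ i, (X*V) i a * (W*V) i b) * (∑ i, (X*V) i b * (W*V) i a) := by
    have hG' : Vᵀ*(Xᵀ*W)*V = (X*V)ᵀ*(W*V) := by
      rw [Matrix.transpose_mul]
      simp only [Matrix.mul_assoc]
    calc star w ⬝ᵥ (ptA (proj x)) *ᵥ w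
        = ∑ a : Fin n, ∑ b : Fin n,
            conj' (∑ i, x (i, a) * w (i, b)) * (∑ i, x (i, b) * w (i, a)) :=
          quad_ptA_proj x w
      _ = ∑ a : Fin n, ∑ b : Fin n, conj' ((Xᵀ*W) a b) * ((Xᵀ*W) b a) := by
          refine Finset.sum_congr rfl fun a _ => Finset.sum_congr rfl fun b _ => ?_
          rw [transpose_entry, transpose_entry]
          rfl
      _ = ((Xᵀ*W).map conj' * (Xᵀ*W)).trace := (trace_entry _).symm
      _ = ((Vᵀ*(Xᵀ*W)*V).map conj' * (Vᵀ*(Xᵀ*W)*V)).trace := (trace_inv hV _).symm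
      _ = (((X*V)ᵀ*(W*V)).map conj' * ((X*V)ᵀ*(W*V))).trace := by rw [hG']
      _ = ∑ a : Fin n, ∑ b : Fin n,
            conj' (((X*V)ᵀ*(W*V)) a b) * (((X*V)ᵀ*(W*V)) b a) := trace_entry _
      _ = ∑ a : Fin n, ∑ b : Fin n,
            conj' (∑ i, (X*V) i a * (W*V) i b) * (∑ i, (X*V) i b * (W*V) i a) := by
          refine Finset.sum_congr rfl fun a _ => Finset.sum_congr rfl fun b _ => ?_
          rw [transpose_entry, transpose_entry]
  -- final computation of the real part
  have hsplit : star w ⬝ᵥ (ptA (proj x) + ((Sx/2 : ℝ) : ℂ) • 1) *ᵥ w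
      = (star w ⬝ᵥ (ptA (proj x)) *ᵥ w) + ((Sx/2 : ℝ) : ℂ) * (star w ⬝ᵥ w) := by
    rw [Matrix.add_mulVec, dotProduct_add, Matrix.smul_mulVec,
      Matrix.one_mulVec, dotProduct_smul, smul_eq_mul]
  rw [hsplit, Complex.add_re, star_dot_self w]
  rw [← Complex.ofReal_mul, Complex.ofReal_re]
  have hcolnorm := colnorm_invariant W V hV
  rw [hq]
  rw [hcolnorm, hwsq] at hcore
  nlinarith [hcore]

lemma density_shift_psd {m n : ℕ} (σ : Matrix (Fin m × Fin n) (Fin m × Fin n) ℂ)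
    (hσ : IsDensityMatrix σ) :
    (ptA σ - ((-(1/2) : ℝ) : ℂ) • 1).PosSemidef := by
  classical
  have hherm : (ptA σ - ((-(1/2) : ℝ) : ℂ) • 1).IsHermitian :=
    (ptA_isHermitian hσ.1.1).sub (smul_one_isHermitian (-(1/2)))
  refine Matrix.PosSemidef.of_dotProduct_mulVec_nonneg hherm fun x => ?_
  set Sx : ℝ := ∑ p, Complex.normSq (x p) with hSxdef
  have hval : star x ⬝ᵥ (ptA σ - ((-(1/2) : ℝ) : ℂ) • 1) *ᵥ x
      = (σ * (ptA (proj x) + ((Sx/2 : ℝ) : ℂ) • 1)).trace := by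
    have h1 : star x ⬝ᵥ (ptA σ - ((-(1/2) : ℝ) : ℂ) • 1) *ᵥ x
        = (star x ⬝ᵥ (ptA σ) *ᵥ x) + ((1/2 : ℝ) : ℂ) * (star x ⬝ᵥ x) := by
      rw [Matrix.sub_mulVec, dotProduct_sub, Matrix.smul_mulVec,
        Matrix.one_mulVec, dotProduct_smul, smul_eq_mul]
      push_cast
      ring
    have h2 : (σ * (ptA (proj x) + ((Sx/2 : ℝ) : ℂ) • 1)).trace
        = (σ * ptA (proj x)).trace + ((Sx/2 : ℝ) : ℂ) := by
      rw [Matrix.mul_add, Matrix.trace_add, Matrix.mul_smul, Matrix.mul_one,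
        Matrix.trace_smul, hσ.2]
      simp
    rw [h1, h2, quad_eq_trace σ x, star_dot_self x, hSxdef]
    push_cast
    ring
  rw [hval]
  exact trace_mul_psd_nonneg hσ.1 (key x)

end lemmas

theorem stmt0 (m n : ℕ) (hm : 1 ≤ m) (hn : 1 ≤ n)
    (ρ σ τ : Matrix (Fin m × Fin n) (Fin m × Fin n) ℂ)
    (hρ : IsDensityMatrix ρ) (hσ : IsDensityMatrix σ) (hτ : IsDensityMatrix τ)
    (t : ℝ) (ht0 : 0 < t) (ht1 : t < 1)
    (hmix : ρ = (t : ℂ) • σ + ((1 - t : ℝ) : ℂ) • τ)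
    (hmin : minEig (ptA ρ) = -(1/2)) :
    minEig (ptA σ) = -(1/2) ∧ minEig (ptA τ) = -(1/2) := by
  classical
  haveI : Nonempty (Fin m × Fin n) := ⟨(⟨0, hm⟩, ⟨0, hn⟩)⟩
  have hermσ : (ptA σ).IsHermitian := ptA_isHermitian hσ.1.1
  have hermτ : (ptA τ).IsHermitian := ptA_isHermitian hτ.1.1
  have hermρ : (ptA ρ).IsHermitian := ptA_isHermitian hρ.1.1
  set a : ℝ := minEig (ptA σ) with hadef
  set b : ℝ := minEig (ptA τ) with hbdef
  have ha : -(1/2) ≤ a := le_minEig hermσ _ (density_shift_psd σ hσ)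
  have hb : -(1/2) ≤ b := le_minEig hermτ _ (density_shift_psd τ hτ)
  have hσp := psd_smul (shifted_psd hermσ) (le_of_lt ht0)
  have hτp := psd_smul (shifted_psd hermτ) (by linarith : (0:ℝ) ≤ 1 - t)
  have hsum := hσp.add hτp
  have heq : (t : ℂ) • (ptA σ - ((a : ℝ) : ℂ) • 1) + ((1 - t : ℝ) : ℂ) • (ptA τ - ((b : ℝ) : ℂ) • 1)
      = ptA ρ - (((t*a + (1-t)*b : ℝ)) : ℂ) • 1 := by
    have hρeq : ptA ρ = (t : ℂ) • ptA σ + ((1 - t : ℝ) : ℂ) • ptA τ := by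
      rw [hmix]
      ext p q
      simp [ptA, Matrix.add_apply, Matrix.smul_apply]
    rw [hρeq]
    ext p q
    simp only [Matrix.add_apply, Matrix.sub_apply, Matrix.smul_apply, Matrix.one_apply,
      smul_eq_mul]
    split_ifs <;> push_cast <;> ring
  rw [heq] at hsum
  have hle := le_minEig hermρ _ hsum
  rw [hmin] at hle
  constructor
  · rw [hadef] at *
    nlinarith
  · rw [hbdef] at *
    nlinarith
end
end

section
/- Let m, n ≥ 1 and let ρ be a density matrix on ℂ^m⊗ℂ^n admitting a pure-state decomposition ρ = Σ_k λ_k · ψ_k ψ_kᴴ, where each λ_k > 0, Σ_k λ_k = 1, and each ψ_k : Fin m × Fin n → ℂ is a unit vector. If the minimal eigenvalue of ρ^{T_A} equals −1/2, then for every index k the minimal eigenvalue of (ψ_k ψ_kᴴ)^{T_A} equals −1/2. -/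
open Matrix Polynomial
open scoped ComplexOrder

noncomputable section

lemma ptA_herm {m n : ℕ} (ρ : Matrix (Fin m × Fin n) (Fin m × Fin n) ℂ)
    (h : ρ.IsHermitian) : (ptA ρ).IsHermitian := by
  ext p q
  simp only [conjTranspose_apply, ptA]
  exact h.apply _ _

lemma proj_herm {k : Type*} [Fintype k] (ψ : k → ℂ) : (proj ψ).IsHermitian := by
  ext p q
  simp [proj, conjTranspose_apply, vecMulVec_apply, mul_comm]

lemma minEig_le_quad {k : Type*} [Fintype k] [DecidableEq k] [Nonempty k]
    {A : Matrix k k ℂ} (hA : A.IsHermitian) (x : k → ℂ) :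
    ((minEig A : ℝ) : ℂ) * (star x ⬝ᵥ x) ≤ star x ⬝ᵥ A *ᵥ x := by
  set c : ℝ := minEig A with hcdef
  have hc : ∀ i, c ≤ hA.eigenvalues i := by
    intro i
    rw [hcdef, minEig, dif_pos hA]
    exact ciInf_le (Set.finite_range _).bddBelow i
  have hpsd : (A - (c : ℂ) • 1).PosSemidef := by
    set U : Matrix k k ℂ := (Matrix.IsHermitian.eigenvectorUnitary hA : Matrix k k ℂ) with hUdef
    have hU : U * star U = 1 := mem_unitaryGroup_iff.mp (Matrix.IsHermitian.eigenvectorUnitary hA).2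
    have key : A - (c : ℂ) • 1
        = U * (diagonal (fun i => ((hA.eigenvalues i - c : ℝ) : ℂ))) * star U := by
      have hs := hA.spectral_theorem
      have h1 : (c : ℂ) • (1 : Matrix k k ℂ) = U * ((c : ℂ) • 1) * star U := by
        rw [mul_smul_comm, Matrix.mul_one, smul_mul_assoc, hU]
      rw [h1]
      conv_lhs => rw [hs, Unitary.conjStarAlgAut_apply]
      rw [← Matrix.sub_mul, ← Matrix.mul_sub]
      congr 1
      congr 1
      rw [← Matrix.diagonal_one, ← Matrix.diagonal_smul]
      rw [Matrix.diagonal_sub]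
      congr 1
      funext i
      simp only [Function.comp, Pi.smul_apply, smul_eq_mul, mul_one, Complex.ofReal_sub]
      norm_num [RCLike.ofReal_alg]
    rw [key]
    have : (diagonal (fun i => ((hA.eigenvalues i - c : ℝ) : ℂ))).PosSemidef := by
      refine posSemidef_diagonal_iff.mpr fun i => ?_
      rw [Complex.zero_le_real]
      linarith [hc i]
    simpa [Matrix.star_eq_conjTranspose] using this.mul_mul_conjTranspose_same U
  have h0 := hpsd.dotProduct_mulVec_nonneg x
  rw [Matrix.sub_mulVec, Matrix.smul_mulVec, Matrix.one_mulVec, dotProduct_sub,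
    dotProduct_smul, smul_eq_mul] at h0
  exact sub_nonneg.mp h0


lemma pure_eig_lb {m n : ℕ} (ψ : Fin m × Fin n → ℂ) (hψ : IsUnitVec ψ)
    (μ : ℝ) (v : Fin m × Fin n → ℂ) (hv : v ≠ 0)
    (heig : ptA (proj ψ) *ᵥ v = (μ : ℂ) • v) : -(1/2) ≤ μ := by
  rcases le_or_gt 0 μ with hpos | hneg
  · linarith
  have hμ0 : (μ : ℂ) ≠ 0 := by exact_mod_cast hneg.ne
  -- the n×n matrices K and L
  set K : Matrix (Fin n) (Fin n) ℂ :=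
    Matrix.of (fun j l => ∑ i, ψ (i, j) * v (i, l)) with hKdef
  set Ψ : Matrix (Fin m) (Fin n) ℂ := Matrix.of (fun i a => ψ (i, a)) with hΨdef
  set L : Matrix (Fin n) (Fin n) ℂ := Ψᴴ * Ψ with hLdef
  -- the eigen-equation, componentwise
  have hstar : ∀ i j, (∑ l, (starRingEnd ℂ) (ψ (i, l)) * K j l) = (μ : ℂ) * v (i, j) := by
    intro i j
    have h := congrFun heig (i, j)
    simp only [Matrix.mulVec, dotProduct, Fintype.sum_prod_type, ptA, proj,
      vecMulVec_apply, Pi.star_apply, Pi.smul_apply, smul_eq_mul] at h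
    rw [← h, Finset.sum_comm]
    refine Finset.sum_congr rfl fun l _ => ?_
    simp only [hKdef, Matrix.of_apply, Finset.mul_sum]
    refine Finset.sum_congr rfl fun k _ => ?_
    simp only [RCLike.star_def]
    ring
  -- K * L = μ • Kᵀ
  have hKL : K * L = (μ : ℂ) • Kᵀ := by
    ext j b
    simp only [Matrix.mul_apply, hLdef, conjTranspose_apply, Matrix.smul_apply,
      transpose_apply, smul_eq_mul, hΨdef, Matrix.of_apply, Pi.star_apply, RCLike.star_def]
    calc ∑ l, K j l * ∑ i, (starRingEnd ℂ) (ψ (i, l)) * ψ (i, b)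
        = ∑ i, ψ (i, b) * ∑ l, (starRingEnd ℂ) (ψ (i, l)) * K j l := by
          simp only [Finset.mul_sum]
          rw [Finset.sum_comm]
          exact Finset.sum_congr rfl fun l _ => Finset.sum_congr rfl fun i _ => by ring
      _ = ∑ i, ψ (i, b) * ((μ : ℂ) * v (i, j)) := by
          exact Finset.sum_congr rfl fun i _ => by rw [hstar]
      _ = (μ : ℂ) * K b j := by
          simp only [hKdef, Matrix.of_apply, Finset.mul_sum]
          exact Finset.sum_congr rfl fun i _ => by ring
  -- L is hermitian PSD with trace 1
  have hLpsd : L.PosSemidef := posSemidef_conjTranspose_mul_self Ψ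
  have hL : L.IsHermitian := hLpsd.1
  have htr : L.trace = 1 := by
    simp only [hLdef, Matrix.trace, Matrix.diag, Matrix.mul_apply, conjTranspose_apply,
      hΨdef, Matrix.of_apply, Pi.star_apply, RCLike.star_def]
    have hz : ∀ (z : ℂ), (starRingEnd ℂ) z * z = ((‖z‖ ^ 2 : ℝ) : ℂ) := by
      intro z
      rw [mul_comm, Complex.mul_conj, Complex.normSq_eq_norm_sq]
    simp only [hz]
    rw [Finset.sum_comm]
    have hre : ∑ y : Fin m, ∑ x : Fin n, ((‖ψ (y, x)‖ ^ 2 : ℝ) : ℂ)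
        = ∑ p : Fin m × Fin n, ((‖ψ p‖ ^ 2 : ℝ) : ℂ) :=
      (Fintype.sum_prod_type (f := fun p : Fin m × Fin n => ((‖ψ p‖ ^ 2 : ℝ) : ℂ))).symm
    rw [hre, ← Complex.ofReal_sum, hψ, Complex.ofReal_one]
  clear_value K L
  -- spectral decomposition of L
  set U : Matrix (Fin n) (Fin n) ℂ := (hL.eigenvectorUnitary : Matrix (Fin n) (Fin n) ℂ)
    with hUdef
  have hUU : U * star U = 1 := mem_unitaryGroup_iff.mp hL.eigenvectorUnitary.2
  have hUU' : star U * U = 1 := mem_unitaryGroup_iff'.mp hL.eigenvectorUnitary.2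
  set d : Fin n → ℝ := hL.eigenvalues with hddef
  have hd0 : ∀ a, 0 ≤ d a := hLpsd.eigenvalues_nonneg
  have hdsum : ∑ a, d a = 1 := by
    have h1 : L.trace = ∑ a, ((d a : ℝ) : ℂ) := by
      conv_lhs => rw [hL.spectral_theorem, Unitary.conjStarAlgAut_apply]
      rw [Matrix.trace_mul_cycle, hUU', Matrix.one_mul, Matrix.trace_diagonal]
      simp [Function.comp, Complex.coe_algebraMap]
      rfl
    rw [htr] at h1
    have h2 : (1 : ℂ) = ((∑ a, d a : ℝ) : ℂ) := by
      rw [h1, Complex.ofReal_sum]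
    exact_mod_cast h2.symm
  have hUD : U * diagonal (RCLike.ofReal ∘ d) = L * U := by
    conv_rhs => rw [hL.spectral_theorem, Unitary.conjStarAlgAut_apply]
    rw [Matrix.mul_assoc, Matrix.mul_assoc, hUU', Matrix.mul_one]
  clear_value U d
  set K' : Matrix (Fin n) (Fin n) ℂ := Uᵀ * K * U with hK'def
  have hK'mat : K' * diagonal (RCLike.ofReal ∘ d) = (μ : ℂ) • K'ᵀ := by
    calc K' * diagonal (RCLike.ofReal ∘ d)
        = Uᵀ * K * (U * diagonal (RCLike.ofReal ∘ d)) := by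
          rw [hK'def, Matrix.mul_assoc]
      _ = Uᵀ * (K * L) * U := by
          rw [hUD, ← Matrix.mul_assoc, Matrix.mul_assoc Uᵀ K L]
      _ = (μ : ℂ) • (Uᵀ * Kᵀ * U) := by
          rw [hKL, Matrix.mul_smul, Matrix.smul_mul]
      _ = (μ : ℂ) • K'ᵀ := by
          rw [hK'def, Matrix.transpose_mul, Matrix.transpose_mul, Matrix.transpose_transpose,
            Matrix.mul_assoc]
  have hK'd : ∀ a b, K' a b * ((d b : ℝ) : ℂ) = (μ : ℂ) * K' b a := by
    intro a b
    have h1 := congrFun (congrFun hK'mat a) b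
    simpa [Matrix.mul_diagonal, Matrix.smul_apply, Matrix.transpose_apply,
      smul_eq_mul, Function.comp] using h1
  -- K is nonzero
  have hKne : K ≠ 0 := by
    intro h0
    apply hv
    funext p
    have h1 := hstar p.1 p.2
    rw [h0] at h1
    simp only [Matrix.zero_apply, mul_zero, Finset.sum_const_zero] at h1
    have := mul_eq_zero.mp h1.symm
    rcases this with h | h
    · exact absurd h hμ0
    · simpa using h
  have hK'ne : K' ≠ 0 := by
    intro h0
    apply hKne
    have hrec : (star U)ᵀ * K' * star U = K := by
      rw [hK'def, ← Matrix.mul_assoc, ← Matrix.mul_assoc, ← Matrix.transpose_mul, hUU,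
        Matrix.transpose_one, Matrix.one_mul, Matrix.mul_assoc, hUU,
        Matrix.mul_one]
    rw [← hrec, h0, Matrix.mul_zero, Matrix.zero_mul]
  obtain ⟨a, b, hab⟩ : ∃ a b, K' a b ≠ 0 := by
    by_contra h
    push_neg at h
    exact hK'ne (by ext a b; simpa using h a b)
  by_cases habeq : a = b
  · subst habeq
    have h1 := hK'd a a
    have h2 : (((d a : ℝ) : ℂ) - (μ : ℂ)) * K' a a = 0 := by linear_combination h1
    rcases mul_eq_zero.mp h2 with h | h
    · have : d a = μ := by
        have := sub_eq_zero.mp h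
        exact_mod_cast this
      linarith [hd0 a]
    · exact absurd h hab
  · have hba : K' b a ≠ 0 := by
      intro h0
      have h1 := hK'd b a
      rw [h0, zero_mul] at h1
      rcases mul_eq_zero.mp h1.symm with h | h
      · exact hμ0 h
      · exact hab h
    have h1 := hK'd a b
    have h2 := hK'd b a
    have h3 : (((d a : ℝ) : ℂ) * ((d b : ℝ) : ℂ) - (μ : ℂ) ^ 2) * (K' a b * K' b a) = 0 := by
      linear_combination (((d b : ℝ) : ℂ) * K' a b) * h2 + ((μ : ℂ) * K' a b) * h1
    have hdd : d a * d b = μ ^ 2 := by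
      rcases mul_eq_zero.mp h3 with h | h
      · have := sub_eq_zero.mp h
        exact_mod_cast this
      · rcases mul_eq_zero.mp h with h | h
        · exact absurd h hab
        · exact absurd h hba
    have hsumab : d a + d b ≤ 1 := by
      have hsub : ∑ x ∈ ({a, b} : Finset (Fin n)), d x ≤ ∑ x, d x :=
        Finset.sum_le_sum_of_subset_of_nonneg (Finset.subset_univ _) (fun i _ _ => hd0 i)
      rw [Finset.sum_pair habeq] at hsub
      linarith [hdsum]
    nlinarith [hd0 a, hd0 b, sq_nonneg (d a - d b), sq_nonneg ((μ : ℝ) + 1/2)]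


lemma quad_sum {I : Type*} [Fintype I] {N : ℕ} (v : I → ℂ) (A : Fin N → Matrix I I ℂ) :
    star v ⬝ᵥ (∑ k, A k) *ᵥ v = ∑ k, star v ⬝ᵥ (A k) *ᵥ v := by
  simp only [Matrix.mulVec, dotProduct, Matrix.sum_apply, Finset.sum_mul, Finset.mul_sum]
  rw [Finset.sum_comm (γ := Fin N)]
  refine Finset.sum_congr rfl fun x _ => ?_
  rw [Finset.sum_comm (γ := Fin N)]

theorem stmt1 (m n N : ℕ) (hm : 1 ≤ m) (hn : 1 ≤ n)
    (ρ : Matrix (Fin m × Fin n) (Fin m × Fin n) ℂ) (hρ : IsDensityMatrix ρ)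
    (lam : Fin N → ℝ) (ψ : Fin N → (Fin m × Fin n → ℂ))
    (hlam : ∀ k, 0 < lam k) (hsum : ∑ k, lam k = 1)
    (hψ : ∀ k, IsUnitVec (ψ k))
    (hdecomp : ρ = ∑ k, (lam k : ℂ) • proj (ψ k))
    (hmin : minEig (ptA ρ) = -(1/2)) :
    ∀ k, minEig (ptA (proj (ψ k))) = -(1/2) := by
  haveI : Nonempty (Fin m) := Fin.pos_iff_nonempty.mp hm
  haveI : Nonempty (Fin n) := Fin.pos_iff_nonempty.mp hn
  have hherm : ∀ k, (ptA (proj (ψ k))).IsHermitian := fun k => ptA_herm _ (proj_herm _)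
  set μ : Fin N → ℝ := fun k => minEig (ptA (proj (ψ k))) with hμdef
  -- lower bound -(1/2) ≤ μ k
  have hlow : ∀ k, -(1/2) ≤ μ k := by
    intro k
    have hre : μ k = ⨅ i, (hherm k).eigenvalues i := dif_pos (hherm k)
    rw [hre]
    refine le_ciInf fun i => ?_
    refine pure_eig_lb (ψ k) (hψ k) _ (⇑((hherm k).eigenvectorBasis i)) ?_ ?_
    · have h0 := (hherm k).eigenvectorBasis.orthonormal.ne_zero i
      intro hc
      apply h0
      ext p
      exact congrFun hc p
    · have h1 := (hherm k).mulVec_eigenvectorBasis i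
      rw [h1]
      funext p
      simp [Pi.smul_apply, Complex.real_smul]
  -- the minimal eigenvector of ptA ρ
  have hρherm : (ptA ρ).IsHermitian := ptA_herm _ hρ.1.1
  have hmin' : minEig (ptA ρ) = ⨅ i, hρherm.eigenvalues i := dif_pos hρherm
  obtain ⟨i0, hi0⟩ := exists_eq_ciInf_of_finite (f := hρherm.eigenvalues)
  set v : Fin m × Fin n → ℂ := ⇑(hρherm.eigenvectorBasis i0) with hvdef
  have hv0 : v ≠ 0 := by
    have h0 := hρherm.eigenvectorBasis.orthonormal.ne_zero i0
    intro hc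
    apply h0
    ext p
    exact congrFun hc p
  have heig : ptA ρ *ᵥ v = ((-(1/2) : ℝ) : ℂ) • v := by
    have h1 := hρherm.mulVec_eigenvectorBasis i0
    have h2 : hρherm.eigenvalues i0 = -(1/2) := by rw [hi0, ← hmin', hmin]
    rw [h2] at h1
    rw [hvdef, h1]
    funext p
    simp [Pi.smul_apply, Complex.real_smul]
  have ht : 0 < star v ⬝ᵥ v := dotProduct_star_self_pos_iff.mpr hv0
  -- split the quadratic form
  have hsplit : ptA ρ = ∑ k, (lam k : ℂ) • ptA (proj (ψ k)) := by
    rw [hdecomp]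
    ext p q
    simp [ptA, Matrix.sum_apply]
  have hquad : star v ⬝ᵥ (ptA ρ) *ᵥ v
      = ∑ k, (lam k : ℂ) * (star v ⬝ᵥ (ptA (proj (ψ k))) *ᵥ v) := by
    rw [hsplit, quad_sum]
    refine Finset.sum_congr rfl fun k _ => ?_
    rw [Matrix.smul_mulVec, dotProduct_smul, smul_eq_mul]
  have hval : star v ⬝ᵥ (ptA ρ) *ᵥ v = ((-(1/2) : ℝ) : ℂ) * (star v ⬝ᵥ v) := by
    rw [heig, dotProduct_smul, smul_eq_mul]
  -- Rayleigh bound each term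
  have hterm : ∀ k, ((lam k : ℂ) * ((μ k : ℝ) : ℂ)) * (star v ⬝ᵥ v)
      ≤ (lam k : ℂ) * (star v ⬝ᵥ (ptA (proj (ψ k))) *ᵥ v) := by
    intro k
    have h1 := minEig_le_quad (hherm k) v
    have h2 : (0 : ℂ) ≤ (lam k : ℂ) := by
      rw [Complex.le_def]
      constructor <;> simp [le_of_lt (hlam k)]
    calc ((lam k : ℂ) * ((μ k : ℝ) : ℂ)) * (star v ⬝ᵥ v)
        = (lam k : ℂ) * (((μ k : ℝ) : ℂ) * (star v ⬝ᵥ v)) := by ring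
      _ ≤ (lam k : ℂ) * (star v ⬝ᵥ (ptA (proj (ψ k))) *ᵥ v) :=
          mul_le_mul_of_nonneg_left h1 h2
  have hsumineq : (∑ k, (lam k : ℂ) * ((μ k : ℝ) : ℂ)) * (star v ⬝ᵥ v)
      ≤ ((-(1/2) : ℝ) : ℂ) * (star v ⬝ᵥ v) := by
    rw [← hval, hquad, Finset.sum_mul]
    exact Finset.sum_le_sum fun k _ => hterm k
  have hsumreal : ∑ k, lam k * μ k ≤ -(1/2) := by
    have hc : ((∑ k, lam k * μ k : ℝ) : ℂ) * (star v ⬝ᵥ v)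
        ≤ ((-(1/2) : ℝ) : ℂ) * (star v ⬝ᵥ v) := by
      rw [Complex.ofReal_sum]
      push_cast
      push_cast at hsumineq
      exact hsumineq
    have htre : 0 < (star v ⬝ᵥ v).re ∧ 0 = (star v ⬝ᵥ v).im := by
      have := Complex.lt_def.mp ht
      simpa using this
    have hre := (Complex.le_def.mp hc).1
    simp only [Complex.mul_re, Complex.ofReal_re, Complex.ofReal_im, zero_mul, sub_zero,
      ← htre.2, mul_zero] at hre
    exact le_of_mul_le_mul_right hre htre.1
  -- conclude equality for every k
  intro k0
  by_contra hne
  have hgt : -(1/2) < μ k0 := lt_of_le_of_ne (hlow k0) (fun h => hne h.symm)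
  have hsum2 : ∑ k, lam k * (-(1/2) : ℝ) ≤ ∑ k, lam k * μ k := by
    refine Finset.sum_le_sum fun k _ => ?_
    exact mul_le_mul_of_nonneg_left (hlow k) (le_of_lt (hlam k))
  have hstrict : ∑ k, lam k * (-(1/2) : ℝ) < ∑ k, lam k * μ k := by
    refine Finset.sum_lt_sum (fun k _ => mul_le_mul_of_nonneg_left (hlow k) (le_of_lt (hlam k)))
      ⟨k0, Finset.mem_univ _, ?_⟩
    exact mul_lt_mul_of_pos_left hgt (hlam k0)
  rw [← Finset.sum_mul, hsum] at hstrict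
  linarith
end
end

section
/- Let d ≥ 1 and let σ : Fin d → ℝ be a family of nonnegative reals. Let F be the complex matrix indexed by Fin d × Fin d with entries F_{(a,b),(c,e)} = σ_a·σ_b if c = b and e = a, and 0 otherwise (F is the partial transpose of vec(Σ)vec(Σ)ᴴ for Σ = diag(σ)). Then the characteristic polynomial of F equals ∏_{i} (X − σ_i²) · ∏_{i<j} (X − σ_iσ_j)(X + σ_iσ_j); equivalently, the eigenvalues of F, with multiplicity, are σ_1², …, σ_d² together with ±σ_iσ_j for each pair i < j. -/
open Matrix Polynomial
open scoped ComplexOrder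

noncomputable section

lemma charpoly_diag_aux {n : Type*} [Fintype n] [DecidableEq n] {R : Type*} [CommRing R]
    (v : n → R) : (Matrix.diagonal v).charpoly = ∏ i, (X - C (v i)) := by
  rw [Matrix.charpoly]
  have h : charmatrix (Matrix.diagonal v) = Matrix.diagonal (fun i => X - C (v i)) := by
    ext i j
    by_cases h : i = j
    · subst h; simp
    · simp [charmatrix_apply_ne _ _ _ h, Matrix.diagonal_apply_ne _ h]
  rw [h, Matrix.det_diagonal]

lemma charpoly_similar_aux {n : Type*} [Fintype n] [DecidableEq n] {R : Type*} [CommRing R]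
    (P Q A : Matrix n n R) (hQP : Q * P = 1) : (Q * A * P).charpoly = A.charpoly := by
  have hPQ : P * Q = 1 := mul_eq_one_comm.mp hQP
  have h : charmatrix (Q * A * P) = (Q.map C) * charmatrix A * (P.map C) := by
    unfold charmatrix
    rw [_root_.map_mul, _root_.map_mul]
    simp only [RingHom.mapMatrix_apply]
    rw [Matrix.mul_sub, Matrix.sub_mul]
    congr 1
    rw [← (Matrix.scalar_commute (X : R[X]) (fun r' => mul_comm _ _) (Q.map C)).eq, Matrix.mul_assoc,
      ← Matrix.map_mul, hQP]
    simp
  rw [Matrix.charpoly, Matrix.charpoly, h, Matrix.det_mul, Matrix.det_mul]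
  have h2 : (Q.map C).det * (P.map C).det = 1 := by
    rw [← Matrix.det_mul, ← Matrix.map_mul, hQP]; simp
  calc (Q.map C).det * (charmatrix A).det * (P.map C).det
      = (charmatrix A).det * ((Q.map C).det * (P.map C).det) := by ring
    _ = (charmatrix A).det := by rw [h2, mul_one]

theorem stmt2 (d : ℕ) (hd : 1 ≤ d) (σ : Fin d → ℝ) (hσ : ∀ i, 0 ≤ σ i)
    (F : Matrix (Fin d × Fin d) (Fin d × Fin d) ℂ)
    (hF : ∀ p q : Fin d × Fin d,
      F p q = if q.1 = p.2 ∧ q.2 = p.1 then ((σ p.1 * σ p.2 : ℝ) : ℂ) else 0) :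
    F.charpoly =
      (∏ i : Fin d, (Polynomial.X - Polynomial.C ((σ i : ℂ) ^ 2))) *
        ∏ p ∈ Finset.univ.filter (fun p : Fin d × Fin d => p.1 < p.2),
          ((Polynomial.X - Polynomial.C ((σ p.1 : ℂ) * (σ p.2 : ℂ))) *
            (Polynomial.X + Polynomial.C ((σ p.1 : ℂ) * (σ p.2 : ℂ)))) := by
  set s : Fin d × Fin d → ℂ := fun p => if p.2 < p.1 then -1 else 1 with hs
  set γ : Fin d × Fin d → ℂ := fun p => if p.1 = p.2 then 0 else s p with hγ
  set α : Fin d × Fin d → ℂ := fun p => if p.1 = p.2 then 1 else 1/2 with hα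
  set β : Fin d × Fin d → ℂ := fun p => if p.1 = p.2 then 0 else s p / 2 with hβ
  set lam : Fin d × Fin d → ℂ := fun p => s p * ((σ p.1 : ℂ) * (σ p.2 : ℂ)) with hlam
  set P : Matrix (Fin d × Fin d) (Fin d × Fin d) ℂ :=
    fun q p => (if q = p then 1 else 0) + γ p * (if q = (p.2, p.1) then 1 else 0) with hP
  set Q : Matrix (Fin d × Fin d) (Fin d × Fin d) ℂ :=
    fun p q => α p * (if q = p then 1 else 0) + β p * (if q = (p.2, p.1) then 1 else 0) with hQ
  have hss : ∀ p : Fin d × Fin d, s p * s p = 1 := by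
    intro p; by_cases h : p.2 < p.1 <;> simp [hs, h]
  have hQP : Q * P = 1 := by
    ext p p'
    rw [Matrix.mul_apply]
    simp only [hQ, hP, mul_add, add_mul, mul_ite, ite_mul, mul_one, mul_zero, one_mul,
      zero_mul, Finset.sum_add_distrib, Finset.sum_ite_eq', Finset.mem_univ, if_true,
      Matrix.one_apply]
    obtain ⟨a, b⟩ := p
    obtain ⟨c, e⟩ := p'
    simp only [hα, hβ, hγ, hs, Prod.mk.injEq]
    by_cases hab : a = b
    · subst hab
      by_cases hc : c = a
      · subst hc
        by_cases he : e = c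
        · subst he; simp
        · simp [he, Ne.symm he]
      · simp [hc, Ne.symm hc]
    · by_cases h1 : c = a ∧ e = b
      · obtain ⟨rfl, rfl⟩ := h1
        rcases lt_or_gt_of_ne hab with h | h
        · simp [hab, Ne.symm hab, h, lt_asymm h] <;> norm_num
        · simp [hab, Ne.symm hab, h, lt_asymm h] <;> norm_num
      · by_cases h2 : c = b ∧ e = a
        · obtain ⟨rfl, rfl⟩ := h2
          rcases lt_or_gt_of_ne hab with h | h
          · simp [hab, Ne.symm hab, h, lt_asymm h] <;> norm_num
          · simp [hab, Ne.symm hab, h, lt_asymm h] <;> norm_num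
        · have h3 : ¬(e = a ∧ c = b) := fun h => h2 ⟨h.2, h.1⟩
          have h4 : ¬(e = b ∧ c = a) := fun h => h1 ⟨h.2, h.1⟩
          have h5 : ¬(a = c ∧ b = e) := fun h => h1 ⟨h.1.symm, h.2.symm⟩
          simp [h1, h2, h3, h4, h5]
  have hF' : ∀ u v : Fin d × Fin d,
      F u v = (if v = (u.2, u.1) then ((σ u.1 : ℂ) * σ u.2) else 0) := by
    intro u v
    rw [hF]
    by_cases h : v = (u.2, u.1)
    · subst h; simp
    · rw [if_neg h, if_neg]
      exact fun hc => h (Prod.ext hc.1 hc.2)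
  have hFP : F * P = P * Matrix.diagonal lam := by
    ext ⟨a, b⟩ ⟨c, e⟩
    rw [Matrix.mul_apply, Matrix.mul_apply]
    simp only [hF', hP, Matrix.diagonal_apply, ite_mul, zero_mul, mul_ite, mul_zero,
      Finset.sum_ite_eq', Finset.mem_univ, if_true]
    simp only [hγ, hs, hlam, Prod.mk.injEq]
    by_cases hab : a = b
    · subst hab
      by_cases hc : c = a
      · subst hc
        by_cases he : e = c
        · subst he; simp <;> ring
        · simp [he, Ne.symm he]
      · simp [hc, Ne.symm hc]
    · by_cases h1 : c = a ∧ e = b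
      · obtain ⟨rfl, rfl⟩ := h1
        rcases lt_or_gt_of_ne hab with h | h
        · simp [hab, Ne.symm hab, h, lt_asymm h] <;> ring
        · simp [hab, Ne.symm hab, h, lt_asymm h] <;> ring
      · by_cases h2 : c = b ∧ e = a
        · obtain ⟨rfl, rfl⟩ := h2
          rcases lt_or_gt_of_ne hab with h | h
          · simp [hab, Ne.symm hab, h, lt_asymm h] <;> ring
          · simp [hab, Ne.symm hab, h, lt_asymm h] <;> ring
        · have h3 : ¬(b = c ∧ a = e) := fun h => h2 ⟨h.1.symm, h.2.symm⟩
          have h4 : ¬(b = e ∧ a = c) := fun h => h1 ⟨h.2.symm, h.1.symm⟩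
          have h5 : ¬(a = c ∧ b = e) := fun h => h1 ⟨h.1.symm, h.2.symm⟩
          have h6 : ¬(a = e ∧ b = c) := fun h => h2 ⟨h.2.symm, h.1.symm⟩
          simp [h3, h4, h5, h6]
  have hD : Q * F * P = Matrix.diagonal lam := by
    rw [Matrix.mul_assoc, hFP, ← Matrix.mul_assoc, hQP, Matrix.one_mul]
  have hch : F.charpoly = ∏ p : Fin d × Fin d, (X - C (lam p)) := by
    rw [← charpoly_similar_aux P Q F hQP, hD, charpoly_diag_aux]
  rw [hch]
  have hsplit := (Finset.prod_filter_mul_prod_filter_not Finset.univ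
    (fun p : Fin d × Fin d => p.1 = p.2) (fun p => X - C (lam p))).symm
  rw [hsplit]
  have hdiag : ∏ p ∈ Finset.univ.filter (fun p : Fin d × Fin d => p.1 = p.2),
      (X - C (lam p)) = ∏ i : Fin d, (X - C ((σ i : ℂ) ^ 2)) := by
    refine Finset.prod_nbij' (fun p => p.1) (fun i => (i, i)) ?_ ?_ ?_ ?_ ?_
    · intro a _; exact Finset.mem_univ _
    · intro i _; simp
    · intro a ha
      simp only [Finset.mem_filter] at ha
      exact Prod.ext rfl ha.2
    · intro i _; rfl
    · intro a ha
      simp only [Finset.mem_filter] at ha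
      have : lam a = (σ a.1 : ℂ) ^ 2 := by
        simp [hlam, hs, ← ha.2, sq, lt_irrefl]
      rw [this]
  have hoff : ∏ p ∈ Finset.univ.filter (fun p : Fin d × Fin d => ¬ p.1 = p.2),
      (X - C (lam p)) =
      ∏ p ∈ Finset.univ.filter (fun p : Fin d × Fin d => p.1 < p.2),
        ((X - C ((σ p.1 : ℂ) * (σ p.2 : ℂ))) * (X + C ((σ p.1 : ℂ) * (σ p.2 : ℂ)))) := by
    rw [← Finset.prod_filter_mul_prod_filter_not
      (Finset.univ.filter fun p : Fin d × Fin d => ¬ p.1 = p.2)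
      (fun p : Fin d × Fin d => p.1 < p.2) (fun p => X - C (lam p)),
      Finset.filter_filter, Finset.filter_filter]
    have hA : Finset.univ.filter (fun p : Fin d × Fin d => ¬ p.1 = p.2 ∧ p.1 < p.2) =
        Finset.univ.filter (fun p : Fin d × Fin d => p.1 < p.2) := by
      ext p
      simp only [Finset.mem_filter, Finset.mem_univ, true_and]
      exact ⟨fun h => h.2, fun h => ⟨ne_of_lt h, h⟩⟩
    have hB : Finset.univ.filter (fun p : Fin d × Fin d => ¬ p.1 = p.2 ∧ ¬ p.1 < p.2) =
        Finset.univ.filter (fun p : Fin d × Fin d => p.2 < p.1) := by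
      ext p
      simp only [Finset.mem_filter, Finset.mem_univ, true_and]
      constructor
      · rintro ⟨hne, hnlt⟩
        exact lt_of_le_of_ne (not_lt.mp hnlt) (fun h => hne h.symm)
      · intro h
        exact ⟨fun h' => absurd h (h' ▸ lt_irrefl _), not_lt.mpr h.le⟩
    rw [hA, hB]
    have hlt : ∏ p ∈ Finset.univ.filter (fun p : Fin d × Fin d => p.1 < p.2),
        (X - C (lam p)) =
        ∏ p ∈ Finset.univ.filter (fun p : Fin d × Fin d => p.1 < p.2),
          (X - C ((σ p.1 : ℂ) * (σ p.2 : ℂ))) := by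
      refine Finset.prod_congr rfl ?_
      intro p hp
      simp only [Finset.mem_filter, Finset.mem_univ, true_and] at hp
      simp [hlam, hs, not_lt.mpr hp.le]
    have hgt : ∏ p ∈ Finset.univ.filter (fun p : Fin d × Fin d => p.2 < p.1),
        (X - C (lam p)) =
        ∏ p ∈ Finset.univ.filter (fun p : Fin d × Fin d => p.1 < p.2),
          (X + C ((σ p.1 : ℂ) * (σ p.2 : ℂ))) := by
      refine (Finset.prod_nbij' (fun p : Fin d × Fin d => (p.2, p.1))
        (fun p : Fin d × Fin d => (p.2, p.1)) ?_ ?_ ?_ ?_ ?_).symm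
      · intro a ha
        simp only [Finset.mem_filter, Finset.mem_univ, true_and] at ha ⊢
        exact ha
      · intro a ha
        simp only [Finset.mem_filter, Finset.mem_univ, true_and] at ha ⊢
        exact ha
      · intro a _; rfl
      · intro a _; rfl
      · intro a ha
        simp only [Finset.mem_filter, Finset.mem_univ, true_and] at ha
        have : lam (a.2, a.1) = -((σ a.1 : ℂ) * (σ a.2 : ℂ)) := by
          simp [hlam, hs, ha]
          ring
        rw [this, map_neg, sub_neg_eq_add]
    rw [hlt, hgt, ← Finset.prod_mul_distrib]
  rw [hdiag, hoff]
end
end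

section
/- Let ψ : Fin 2 × Fin 2 → ℂ be a unit vector (a pure two-qubit state). Then the minimal eigenvalue of the partial transpose (ψψᴴ)^{T_A} equals −1/2 if and only if ψ is maximally entangled, i.e. its reduced matrix R, defined by R_{i,k} = Σ_j ψ(i,j)·conj(ψ(k,j)), equals (1/2) times the 2×2 identity matrix. -/
open Matrix Polynomial
open scoped ComplexOrder

noncomputable section

lemma detShift {n : Type*} [Fintype n] [DecidableEq n] {A : Matrix n n ℂ}
    (hA : A.IsHermitian) (μ : ℂ) :
    (A - μ • 1).det = ∏ i, ((hA.eigenvalues i : ℂ) - μ) := by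
  have hU : (hA.eigenvectorUnitary : Matrix n n ℂ) * star (hA.eigenvectorUnitary : Matrix n n ℂ) = 1 :=
    (Matrix.mem_unitaryGroup_iff).mp hA.eigenvectorUnitary.2
  have key : A - μ • 1
      = (hA.eigenvectorUnitary : Matrix n n ℂ) *
        (diagonal (RCLike.ofReal ∘ hA.eigenvalues) - μ • 1) *
        star (hA.eigenvectorUnitary : Matrix n n ℂ) := by
    rw [mul_sub, sub_mul, Matrix.mul_smul, mul_one, Matrix.smul_mul, hU]
    rw [← Unitary.conjStarAlgAut_apply (S := ℂ), ← hA.spectral_theorem]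
  rw [key, det_mul_right_comm, hU, one_mul, smul_one_eq_diagonal, diagonal_sub, det_diagonal]
  rfl

def e4 : Fin 4 ≃ Fin 2 × Fin 2 where
  toFun := ![(0,0),(0,1),(1,0),(1,1)]
  invFun := fun p => ![![0,1],![2,3]] p.1 p.2
  left_inv := by decide
  right_inv := by decide

set_option maxHeartbeats 2000000

theorem stmt3 (ψ : Fin 2 × Fin 2 → ℂ) (hψ : IsUnitVec ψ) :
    minEig (ptA (proj ψ)) = -(1/2) ↔ MaxEntangled ψ := by
  have hM : (ptA (proj ψ)).IsHermitian := by
    ext p q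
    simp [ptA, proj, vecMulVec, conjTranspose_apply, mul_comm]
  -- normalization in ℂ
  have hSR : ‖ψ (0,0)‖^2 + ‖ψ (0,1)‖^2 + (‖ψ (1,0)‖^2 + ‖ψ (1,1)‖^2) = 1 := by
    have h := hψ
    unfold IsUnitVec at h
    rw [Fintype.sum_prod_type] at h
    simp only [Fin.sum_univ_two] at h
    exact h
  have cast_norm : ∀ z : ℂ, ((‖z‖^2 : ℝ) : ℂ) = z * (starRingEnd ℂ) z := by
    intro z
    rw [Complex.sq_norm, Complex.mul_conj]
  have hS : ψ (0,0) * (starRingEnd ℂ) (ψ (0,0)) + ψ (0,1) * (starRingEnd ℂ) (ψ (0,1))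
      + ψ (1,0) * (starRingEnd ℂ) (ψ (1,0)) + ψ (1,1) * (starRingEnd ℂ) (ψ (1,1)) = 1 := by
    rw [← cast_norm, ← cast_norm, ← cast_norm, ← cast_norm]
    push_cast
    exact_mod_cast by linarith [hSR]
  set t : ℝ := ‖ψ (0,0) * ψ (1,1) - ψ (0,1) * ψ (1,0)‖^2 with htdef
  have ht0 : (0:ℝ) ≤ t := by positivity
  have htC : (t : ℂ) = (ψ (0,0) * ψ (1,1) - ψ (0,1) * ψ (1,0)) *
      ((starRingEnd ℂ) (ψ (0,0)) * (starRingEnd ℂ) (ψ (1,1))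
       - (starRingEnd ℂ) (ψ (0,1)) * (starRingEnd ℂ) (ψ (1,0))) := by
    rw [htdef, cast_norm]
    simp [map_sub, _root_.map_mul]
  -- determinant identity
  have hdetC : ∀ μ : ℂ, (ptA (proj ψ) - μ • 1).det = ((μ:ℂ)^2 - μ + t)*((μ:ℂ)^2 - t) := by
    intro μ
    have hsub : ((ptA (proj ψ) - μ • 1).submatrix e4 e4) =
      !![ψ (0,0) * (starRingEnd ℂ) (ψ (0,0)) - μ, ψ (0,0) * (starRingEnd ℂ) (ψ (0,1)),
           ψ (1,0) * (starRingEnd ℂ) (ψ (0,0)), ψ (1,0) * (starRingEnd ℂ) (ψ (0,1));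
         ψ (0,1) * (starRingEnd ℂ) (ψ (0,0)), ψ (0,1) * (starRingEnd ℂ) (ψ (0,1)) - μ,
           ψ (1,1) * (starRingEnd ℂ) (ψ (0,0)), ψ (1,1) * (starRingEnd ℂ) (ψ (0,1));
         ψ (0,0) * (starRingEnd ℂ) (ψ (1,0)), ψ (0,0) * (starRingEnd ℂ) (ψ (1,1)),
           ψ (1,0) * (starRingEnd ℂ) (ψ (1,0)) - μ, ψ (1,0) * (starRingEnd ℂ) (ψ (1,1));
         ψ (0,1) * (starRingEnd ℂ) (ψ (1,0)), ψ (0,1) * (starRingEnd ℂ) (ψ (1,1)),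
           ψ (1,1) * (starRingEnd ℂ) (ψ (1,0)), ψ (1,1) * (starRingEnd ℂ) (ψ (1,1)) - μ] := by
      ext i j
      fin_cases i <;> fin_cases j <;>
        simp [e4, ptA, proj, vecMulVec, Matrix.one_apply] <;>
        (intro h; exact absurd h (by decide))
    rw [← det_submatrix_equiv_self e4, hsub, htC]
    simp [det_succ_row_zero, Fin.sum_univ_succ, Fin.succAbove, Fin.castSucc,
      Fin.castAdd, Fin.castLE, Finset.univ_unique]
    linear_combination (-μ*(μ^2 - (ψ (0,0) * ψ (1,1) - ψ (0,1) * ψ (1,0)) *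
      ((starRingEnd ℂ) (ψ (0,0)) * (starRingEnd ℂ) (ψ (1,1))
       - (starRingEnd ℂ) (ψ (0,1)) * (starRingEnd ℂ) (ψ (1,0)))))*hS
  have hprod : ∀ μ : ℝ, (∏ i, (hM.eigenvalues i - μ)) = (μ^2 - μ + t)*(μ^2 - t) := by
    intro μ
    have h1 := detShift hM (μ : ℂ)
    rw [hdetC] at h1
    have h2 : ((∏ i, (hM.eigenvalues i - μ) : ℝ) : ℂ) = (((μ^2 - μ + t)*(μ^2 - t) : ℝ) : ℂ) := by
      push_cast
      rw [← h1]
    exact_mod_cast h2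
  set s := Real.sqrt t with hsdef
  have hsq : s^2 = t := Real.sq_sqrt ht0
  have hs0 : (0:ℝ) ≤ s := Real.sqrt_nonneg t
  have hlow : ∀ i, -s ≤ hM.eigenvalues i := by
    intro i
    have h := hprod (hM.eigenvalues i)
    have hz : (∏ j, (hM.eigenvalues j - hM.eigenvalues i)) = 0 :=
      Finset.prod_eq_zero (Finset.mem_univ i) (sub_self _)
    rw [hz] at h
    set x := hM.eigenvalues i with hxdef
    rcases mul_eq_zero.mp h.symm with h1 | h1
    · nlinarith [sq_nonneg x]
    · have habs : |x| = s := by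
        rw [hsdef, ← Real.sqrt_sq_eq_abs]
        congr 1
        linarith
      nlinarith [neg_abs_le x]
  have hex : ∃ i, hM.eigenvalues i = -s := by
    have h := hprod (-s)
    have h0 : (∏ i, (hM.eigenvalues i - (-s))) = 0 := by
      rw [h]; nlinarith
    obtain ⟨i, _, hi⟩ := Finset.prod_eq_zero_iff.mp h0
    exact ⟨i, by linarith⟩
  have hmin : minEig (ptA (proj ψ)) = -s := by
    obtain ⟨i0, hi0⟩ := hex
    unfold minEig
    rw [dif_pos hM]
    apply le_antisymm
    · exact (ciInf_le (Finite.bddBelow_range _) i0).trans_eq hi0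
    · exact le_ciInf hlow
  rw [hmin]
  -- Lagrange identity data
  have hpC : ((‖ψ (0,0)‖^2 + ‖ψ (0,1)‖^2 : ℝ) : ℂ)
      = ψ (0,0) * (starRingEnd ℂ) (ψ (0,0)) + ψ (0,1) * (starRingEnd ℂ) (ψ (0,1)) := by
    push_cast [cast_norm]; ring
  have hqC : ((‖ψ (1,0)‖^2 + ‖ψ (1,1)‖^2 : ℝ) : ℂ)
      = ψ (1,0) * (starRingEnd ℂ) (ψ (1,0)) + ψ (1,1) * (starRingEnd ℂ) (ψ (1,1)) := by
    push_cast [cast_norm]; ring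
  have hzC : ((‖ψ (0,0) * (starRingEnd ℂ) (ψ (1,0)) + ψ (0,1) * (starRingEnd ℂ) (ψ (1,1))‖^2 : ℝ) : ℂ)
      = (ψ (0,0) * (starRingEnd ℂ) (ψ (1,0)) + ψ (0,1) * (starRingEnd ℂ) (ψ (1,1))) *
        ((starRingEnd ℂ) (ψ (0,0)) * ψ (1,0) + (starRingEnd ℂ) (ψ (0,1)) * ψ (1,1)) := by
    rw [cast_norm]
    simp [map_add, _root_.map_mul]
  have hLag : t = (‖ψ (0,0)‖^2 + ‖ψ (0,1)‖^2) * (‖ψ (1,0)‖^2 + ‖ψ (1,1)‖^2)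
      - ‖ψ (0,0) * (starRingEnd ℂ) (ψ (1,0)) + ψ (0,1) * (starRingEnd ℂ) (ψ (1,1))‖^2 := by
    have : (t : ℂ) = ((((‖ψ (0,0)‖^2 + ‖ψ (0,1)‖^2) * (‖ψ (1,0)‖^2 + ‖ψ (1,1)‖^2)
      - ‖ψ (0,0) * (starRingEnd ℂ) (ψ (1,0)) + ψ (0,1) * (starRingEnd ℂ) (ψ (1,1))‖^2 : ℝ)) : ℂ) := by
      rw [htC]
      push_cast [hpC, hqC, hzC]
      ring
    exact_mod_cast this
  constructor
  · intro h
    have hs2 : s = 1/2 := by linarith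
    have ht4 : t = 1/4 := by rw [← hsq, hs2]; norm_num
    have hz0 : ‖ψ (0,0) * (starRingEnd ℂ) (ψ (1,0)) + ψ (0,1) * (starRingEnd ℂ) (ψ (1,1))‖^2 = 0 := by
      nlinarith [sq_nonneg ((‖ψ (0,0)‖^2 + ‖ψ (0,1)‖^2) - (‖ψ (1,0)‖^2 + ‖ψ (1,1)‖^2))]
    have hp2 : ‖ψ (0,0)‖^2 + ‖ψ (0,1)‖^2 = 1/2 := by
      nlinarith [sq_nonneg ((‖ψ (0,0)‖^2 + ‖ψ (0,1)‖^2) - (‖ψ (1,0)‖^2 + ‖ψ (1,1)‖^2))]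
    have hq2 : ‖ψ (1,0)‖^2 + ‖ψ (1,1)‖^2 = 1/2 := by linarith
    have hz00 : ψ (0,0) * (starRingEnd ℂ) (ψ (1,0)) + ψ (0,1) * (starRingEnd ℂ) (ψ (1,1)) = 0 := by
      have := hz0
      rwa [pow_eq_zero_iff (by norm_num), norm_eq_zero] at this
    have hz10 : ψ (1,0) * (starRingEnd ℂ) (ψ (0,0)) + ψ (1,1) * (starRingEnd ℂ) (ψ (0,1)) = 0 := by
      have := congrArg (starRingEnd ℂ) hz00
      simpa [map_add, _root_.map_mul, mul_comm] using this
    unfold MaxEntangled reducedA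
    ext i k
    fin_cases i <;> fin_cases k <;>
      simp [Fin.sum_univ_two, Matrix.one_apply, Matrix.smul_apply]
    · show ψ (0,0) * (starRingEnd ℂ) (ψ (0,0)) + ψ (0,1) * (starRingEnd ℂ) (ψ (0,1)) = 2⁻¹
      rw [← hpC, hp2]; norm_num
    · exact hz00
    · exact hz10
    · show ψ (1,0) * (starRingEnd ℂ) (ψ (1,0)) + ψ (1,1) * (starRingEnd ℂ) (ψ (1,1)) = 2⁻¹
      rw [← hqC, hq2]; norm_num
  · intro h
    have h00 : ψ (0,0) * (starRingEnd ℂ) (ψ (0,0)) + ψ (0,1) * (starRingEnd ℂ) (ψ (0,1)) = 2⁻¹ := by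
      have := congr_fun (congr_fun h 0) 0
      simpa [reducedA, Fin.sum_univ_two, Matrix.one_apply, Matrix.smul_apply] using this
    have h01 : ψ (0,0) * (starRingEnd ℂ) (ψ (1,0)) + ψ (0,1) * (starRingEnd ℂ) (ψ (1,1)) = 0 := by
      have := congr_fun (congr_fun h 0) 1
      simpa [reducedA, Fin.sum_univ_two, Matrix.one_apply, Matrix.smul_apply] using this
    have h10 : ψ (1,0) * (starRingEnd ℂ) (ψ (0,0)) + ψ (1,1) * (starRingEnd ℂ) (ψ (0,1)) = 0 := by
      have := congr_fun (congr_fun h 1) 0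
      simpa [reducedA, Fin.sum_univ_two, Matrix.one_apply, Matrix.smul_apply] using this
    have h11 : ψ (1,0) * (starRingEnd ℂ) (ψ (1,0)) + ψ (1,1) * (starRingEnd ℂ) (ψ (1,1)) = 2⁻¹ := by
      have := congr_fun (congr_fun h 1) 1
      simpa [reducedA, Fin.sum_univ_two, Matrix.one_apply, Matrix.smul_apply] using this
    have ht4C : (t : ℂ) = 1/4 := by
      rw [htC]
      linear_combination (ψ (1,0) * (starRingEnd ℂ) (ψ (1,0)) + ψ (1,1) * (starRingEnd ℂ) (ψ (1,1)))*h00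
        + (1/2 : ℂ)*h11 - (ψ (1,0) * (starRingEnd ℂ) (ψ (0,0)) + ψ (1,1) * (starRingEnd ℂ) (ψ (0,1)))*h01
    have ht4 : t = 1/4 := by
      have h' : ((t:ℝ):ℂ) = ((1/4:ℝ):ℂ) := by rw [ht4C]; norm_num
      exact Complex.ofReal_inj.mp h'
    have hs2 : s = 1/2 := by
      rw [hsdef, ht4, show (1/4:ℝ) = (1/2)^2 by norm_num, Real.sqrt_sq (by norm_num)]
    rw [hs2]
end
end

section
/- Let ρ be a density matrix on ℂ²⊗ℂ² (a two-qubit state). If the minimal eigenvalue of the partial transpose ρ^{T_A} equals −1/2, then the multiset of eigenvalues of ρ^{T_A} (with multiplicity) is exactly {1/2, 1/2, 1/2, −1/2}. -/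
open Matrix Polynomial
open scoped ComplexOrder

noncomputable section

lemma trace_eq_sum_eigs {k : Type*} [Fintype k] [DecidableEq k] {A : Matrix k k ℂ}
    (hA : A.IsHermitian) : A.trace = ∑ i, (hA.eigenvalues i : ℂ) := by
  have hUU : star (hA.eigenvectorUnitary : Matrix k k ℂ) * (hA.eigenvectorUnitary : Matrix k k ℂ)
      = 1 := Matrix.mem_unitaryGroup_iff'.mp hA.eigenvectorUnitary.2
  conv_lhs => rw [hA.spectral_theorem, Unitary.conjStarAlgAut_apply]
  rw [Matrix.trace_mul_cycle, Matrix.mul_assoc, ← Matrix.mul_assoc, hUU, Matrix.one_mul,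
    Matrix.trace_diagonal]
  rfl

lemma trace_sq_eq_sum_sq {k : Type*} [Fintype k] [DecidableEq k] {A : Matrix k k ℂ}
    (hA : A.IsHermitian) : (A * A).trace = ∑ i, ((hA.eigenvalues i : ℂ))^2 := by
  have hUU : star (hA.eigenvectorUnitary : Matrix k k ℂ) * (hA.eigenvectorUnitary : Matrix k k ℂ)
      = 1 := Matrix.mem_unitaryGroup_iff'.mp hA.eigenvectorUnitary.2
  set U : Matrix k k ℂ := (hA.eigenvectorUnitary : Matrix k k ℂ)
  set D : Matrix k k ℂ := diagonal (RCLike.ofReal ∘ hA.eigenvalues) with hD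
  have hAA : A * A = U * (D * D) * star U := by
    conv_lhs => rw [hA.spectral_theorem, Unitary.conjStarAlgAut_apply]
    rw [show U * D * star U * (U * D * star U) = U * (D * ((star U * U) * (D * star U))) by
      simp only [Matrix.mul_assoc], hUU, Matrix.one_mul]
    simp only [Matrix.mul_assoc]
  rw [hAA, Matrix.trace_mul_cycle, ← Matrix.mul_assoc, hUU, Matrix.one_mul, hD,
    Matrix.diagonal_mul_diagonal, Matrix.trace_diagonal]
  simp [sq]

lemma trace_ptA {m n : ℕ} (ρ : Matrix (Fin m × Fin n) (Fin m × Fin n) ℂ) :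
    (ptA ρ).trace = ρ.trace := rfl

lemma trace_ptA_sq {m n : ℕ} (ρ : Matrix (Fin m × Fin n) (Fin m × Fin n) ℂ) :
    (ptA ρ * ptA ρ).trace = (ρ * ρ).trace := by
  simp only [Matrix.trace, Matrix.diag, Matrix.mul_apply, ptA]
  rw [← Finset.sum_product']
  rw [← Finset.sum_product']
  apply Finset.sum_nbij' (fun x => ((x.2.1, x.1.2), (x.1.1, x.2.2)))
    (fun x => ((x.2.1, x.1.2), (x.1.1, x.2.2))) <;> simp [mul_comm]

theorem stmt4 (ρ : Matrix (Fin 2 × Fin 2) (Fin 2 × Fin 2) ℂ) (hρ : IsDensityMatrix ρ)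
    (hmin : minEig (ptA ρ) = -(1/2)) (h : (ptA ρ).IsHermitian) :
    Finset.univ.val.map h.eigenvalues = ({1/2, 1/2, 1/2, -(1/2)} : Multiset ℝ) := by
  classical
  set f := h.eigenvalues with hf
  have hHρ : ρ.IsHermitian := hρ.1.1
  set μ := hHρ.eigenvalues with hμ
  -- sums of eigenvalues
  have hμsum : ∑ i, μ i = 1 := by
    have := trace_eq_sum_eigs hHρ
    rw [hρ.2] at this
    have : ((∑ i, μ i : ℝ) : ℂ) = 1 := by push_cast; rw [← this]
    exact_mod_cast this
  have hμnn : ∀ i, 0 ≤ μ i := fun i => hρ.1.eigenvalues_nonneg i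
  have hfsum : ∑ i, f i = 1 := by
    have := trace_eq_sum_eigs h
    rw [trace_ptA, hρ.2] at this
    have : ((∑ i, f i : ℝ) : ℂ) = 1 := by push_cast; rw [← this]
    exact_mod_cast this
  have hfsq_eq : ∑ i, (f i)^2 = ∑ i, (μ i)^2 := by
    have h1 := trace_sq_eq_sum_sq h
    have h2 := trace_sq_eq_sum_sq hHρ
    rw [trace_ptA_sq, h2] at h1
    have : ((∑ i, (f i)^2 : ℝ) : ℂ) = ((∑ i, (μ i)^2 : ℝ) : ℂ) := by push_cast; rw [← h1]
    exact_mod_cast this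
  have hμsq : ∑ i, (μ i)^2 ≤ 1 := by
    calc ∑ i, (μ i)^2 ≤ ∑ i, μ i := by
          apply Finset.sum_le_sum
          intro i _
          have hle1 : μ i ≤ 1 := by
            rw [← hμsum]
            exact Finset.single_le_sum (fun j _ => hμnn j) (Finset.mem_univ i)
          nlinarith [hμnn i]
      _ = 1 := hμsum
  have hfsq : ∑ i, (f i)^2 ≤ 1 := hfsq_eq ▸ hμsq
  -- min eigenvalue facts
  have hinf : (⨅ i, f i) = -(1/2) := by
    have : minEig (ptA ρ) = ⨅ i, h.eigenvalues i := dif_pos h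
    rw [this] at hmin; exact hmin
  have hlb : ∀ i, -(1/2) ≤ f i := by
    intro i
    rw [← hinf]
    exact ciInf_le (Finite.bddBelow_range f) i
  obtain ⟨i0, hi0min⟩ := Finite.exists_min f
  have hi0 : f i0 = -(1/2) := le_antisymm (by rw [← hinf]; exact le_ciInf hi0min) (hlb i0)
  -- sums over the complement of i0
  have hcard : (Finset.univ.erase i0).card = 3 := by
    rw [Finset.card_erase_of_mem (Finset.mem_univ i0)]
    rfl
  have hsum_erase : ∑ j ∈ Finset.univ.erase i0, f j = 3/2 := by
    have := Finset.add_sum_erase Finset.univ f (Finset.mem_univ i0)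
    rw [hfsum, hi0] at this
    linarith
  have hsq_erase : ∑ j ∈ Finset.univ.erase i0, (f j)^2 ≤ 3/4 := by
    have h3 := Finset.add_sum_erase Finset.univ (fun j => (f j)^2) (Finset.mem_univ i0)
    nlinarith [hfsq, hi0, h3]
  have hzero : ∑ j ∈ Finset.univ.erase i0, (f j - 1/2)^2 ≤ 0 := by
    have e0 : ∀ j, (f j - 1/2)^2 = (f j)^2 - f j + 1/4 := by intro j; ring
    have e1 : ∑ j ∈ Finset.univ.erase i0, (f j - 1/2)^2
        = (∑ j ∈ Finset.univ.erase i0, (f j)^2) - (∑ j ∈ Finset.univ.erase i0, f j)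
          + ((Finset.univ.erase i0).card : ℝ) * (1/4) := by
      rw [Finset.sum_congr rfl (fun j _ => e0 j), Finset.sum_add_distrib,
        Finset.sum_sub_distrib, Finset.sum_const, nsmul_eq_mul]
    rw [e1, hcard]
    push_cast
    linarith
  have hval : ∀ j ∈ Finset.univ.erase i0, f j = 1/2 := by
    intro j hj
    have hnn : ∀ j ∈ Finset.univ.erase i0, 0 ≤ (f j - 1/2)^2 := fun j _ => sq_nonneg _
    have := (Finset.sum_eq_zero_iff_of_nonneg hnn).mp
      (le_antisymm hzero (Finset.sum_nonneg hnn)) j hj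
    have := sq_eq_zero_iff.mp this
    linarith
  -- assemble the multiset
  have huniv : (Finset.univ : Finset (Fin 2 × Fin 2)).val
      = i0 ::ₘ (Finset.univ.erase i0).val := by
    conv_lhs => rw [← Finset.insert_erase (Finset.mem_univ i0)]
    exact Finset.insert_val_of_notMem (Finset.notMem_erase i0 _)
  rw [huniv, Multiset.map_cons, hi0]
  have hmape : (Finset.univ.erase i0).val.map f = Multiset.replicate 3 (1/2 : ℝ) := by
    rw [Multiset.map_congr rfl (fun j hj => hval j hj)]
    rw [Multiset.map_const']
    rw [show (Finset.univ.erase i0).val.card = 3 from hcard]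
  rw [hmape]
  show (-(1/2) : ℝ) ::ₘ (1/2) ::ₘ (1/2) ::ₘ (1/2) ::ₘ 0 = (1/2) ::ₘ (1/2) ::ₘ (1/2) ::ₘ (-(1/2)) ::ₘ 0
  rw [Multiset.cons_swap (-(1/2) : ℝ) (1/2), Multiset.cons_swap (-(1/2) : ℝ) (1/2),
    Multiset.cons_swap (-(1/2) : ℝ) (1/2)]
end
end

section
/- Let n ≥ 1 and let ψ : Fin n × Fin n → ℂ be a maximally entangled unit vector. Then the multiset of eigenvalues (with multiplicity) of the partial transpose (ψψᴴ)^{T_A} consists of the value 1/n with multiplicity n(n+1)/2 and the value −1/n with multiplicity n(n−1)/2. -/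
open Matrix Polynomial
open scoped ComplexOrder

noncomputable section

theorem stmt7 (n : ℕ) (hn : 1 ≤ n) (ψ : Fin n × Fin n → ℂ)
    (hψ : IsUnitVec ψ) (hME : MaxEntangled ψ)
    (h : (ptA (proj ψ)).IsHermitian) :
    Finset.univ.val.map h.eigenvalues =
      Multiset.replicate (n * (n + 1) / 2) ((n : ℝ))⁻¹ +
        Multiset.replicate (n * (n - 1) / 2) (-((n : ℝ))⁻¹) := by
  classical
  have hn0 : (n : ℂ) ≠ 0 := Nat.cast_ne_zero.mpr (by omega)
  have hn0R : (n : ℝ) ≠ 0 := Nat.cast_ne_zero.mpr (by omega)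
  set B : Matrix (Fin n) (Fin n) ℂ := Matrix.of (fun i j => ψ (i, j)) with hB
  have hBBH : B * Bᴴ = ((n : ℂ))⁻¹ • 1 := by
    ext i k
    have := congrFun (congrFun hME i) k
    simpa [Matrix.mul_apply, Matrix.conjTranspose_apply, hB, reducedA] using this
  have hBHB : Bᴴ * B = ((n : ℂ))⁻¹ • 1 := by
    have h1 : B * ((n : ℂ) • Bᴴ) = 1 := by
      rw [Matrix.mul_smul, hBBH, smul_smul, mul_inv_cancel₀ hn0, one_smul]
    have h2 : ((n : ℂ) • Bᴴ) * B = 1 := mul_eq_one_comm.mp h1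
    rw [Matrix.smul_mul] at h2
    calc Bᴴ * B = ((n:ℂ))⁻¹ • ((n:ℂ) • (Bᴴ * B)) := by
          rw [smul_smul, inv_mul_cancel₀ hn0, one_smul]
      _ = ((n:ℂ))⁻¹ • 1 := by rw [h2]
  have hrow : ∀ i k : Fin n, (∑ j, ψ (i, j) * (starRingEnd ℂ) (ψ (k, j)))
      = if i = k then ((n : ℂ))⁻¹ else 0 := by
    intro i k
    have := congrFun (congrFun hME i) k
    simpa [reducedA, Matrix.one_apply, mul_ite] using this
  have hcol : ∀ j l : Fin n, (∑ p, ψ (p, j) * (starRingEnd ℂ) (ψ (p, l)))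
      = if j = l then ((n : ℂ))⁻¹ else 0 := by
    intro j l
    have := congrFun (congrFun hBHB l) j
    have h2 : (∑ p, (starRingEnd ℂ) (ψ (p, l)) * ψ (p, j))
        = if j = l then ((n:ℂ))⁻¹ else 0 := by
      simpa [Matrix.mul_apply, Matrix.conjTranspose_apply, hB, Matrix.one_apply, mul_ite,
        eq_comm] using this
    rw [← h2]
    exact Finset.sum_congr rfl fun p _ => mul_comm _ _
  set M := ptA (proj ψ) with hM
  -- M² = (1/n²)·1
  have hM2 : M * M = (((n : ℂ))⁻¹ ^ 2) • 1 := by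
    ext ⟨i, j⟩ ⟨k, l⟩
    have lhs_eq : (M * M) (i, j) (k, l)
        = (∑ p, ψ (p, j) * (starRingEnd ℂ) (ψ (p, l)))
          * (∑ q, ψ (k, q) * (starRingEnd ℂ) (ψ (i, q))) := by
      rw [Matrix.mul_apply, Fintype.sum_prod_type, Finset.sum_mul_sum]
      refine Finset.sum_congr rfl fun p _ => Finset.sum_congr rfl fun q _ => ?_
      simp only [hM, ptA, proj, Matrix.vecMulVec_apply, Pi.star_apply, RCLike.star_def]
      ring
    rw [lhs_eq, hcol, hrow]
    simp only [Matrix.smul_apply, Matrix.one_apply, Prod.mk.injEq, smul_eq_mul]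
    rcases eq_or_ne j l with h1 | h1
    · rcases eq_or_ne i k with h2 | h2
      · simp [h1, h2, sq]
      · simp [h1, h2, Ne.symm h2]
    · rcases eq_or_ne i k with h2 | h2
      · simp [h1, h2]
      · simp [h1, h2, Ne.symm h2]
  -- trace M = 1
  have htr : M.trace = 1 := by
    have hdiag : ∀ p : Fin n × Fin n, M p p = ((‖ψ p‖ ^ 2 : ℝ) : ℂ) := by
      rintro ⟨i, j⟩
      simp [hM, ptA, proj, Matrix.vecMulVec_apply, Complex.mul_conj, Complex.normSq_eq_norm_sq]
    have : M.trace = ∑ p : Fin n × Fin n, ((‖ψ p‖ ^ 2 : ℝ) : ℂ) := by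
      rw [Matrix.trace]
      exact Finset.sum_congr rfl fun p _ => hdiag p
    rw [this, ← Complex.ofReal_sum, hψ, Complex.ofReal_one]
  -- each eigenvalue is ±1/n
  have heig : ∀ p, h.eigenvalues p = (n : ℝ)⁻¹ ∨ h.eigenvalues p = -(n : ℝ)⁻¹ := by
    intro p
    have hv := h.mulVec_eigenvectorBasis p
    set v : (Fin n × Fin n) → ℂ := ⇑(h.eigenvectorBasis p) with hvdef
    have hvne : v ≠ 0 := by
      intro hc
      apply h.eigenvectorBasis.orthonormal.ne_zero p
      ext i
      exact congrFun hc i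
    have hv' : M *ᵥ v = ((h.eigenvalues p : ℂ)) • v := by
      rw [hv]; ext i; simp [Complex.real_smul]
    have key : (((h.eigenvalues p : ℂ) ^ 2) - ((n : ℂ))⁻¹ ^ 2) • v = 0 := by
      have e1 : (M * M) *ᵥ v = (((n : ℂ))⁻¹ ^ 2) • v := by
        rw [hM2, Matrix.smul_mulVec, Matrix.one_mulVec]
      have e2 : (M * M) *ᵥ v = ((h.eigenvalues p : ℂ) ^ 2) • v := by
        rw [← Matrix.mulVec_mulVec, hv', Matrix.mulVec_smul, hv', smul_smul, ← sq]
      rw [sub_smul, ← e2, e1, sub_self]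
    have hsq : h.eigenvalues p ^ 2 = (n : ℝ)⁻¹ ^ 2 := by
      rcases smul_eq_zero.mp key with h0 | h0
      · have h1 := sub_eq_zero.mp h0
        have h2 : ((h.eigenvalues p ^ 2 : ℝ) : ℂ) = (((n : ℝ)⁻¹ ^ 2 : ℝ) : ℂ) := by
          push_cast
          exact h1
        exact_mod_cast h2
      · exact absurd h0 hvne
    have hfac : (h.eigenvalues p - (n : ℝ)⁻¹) * (h.eigenvalues p + (n : ℝ)⁻¹) = 0 := by
      linear_combination hsq
    rcases mul_eq_zero.mp hfac with h0 | h0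
    · exact Or.inl (by linarith)
    · exact Or.inr (by linarith)
  -- sum of eigenvalues = 1
  have hsum : ∑ p, h.eigenvalues p = 1 := by
    have hdiag : M.trace
        = Matrix.trace (Matrix.diagonal (RCLike.ofReal ∘ h.eigenvalues) : Matrix _ _ ℂ) := by
      conv_lhs => rw [h.spectral_theorem]
      rw [Unitary.conjStarAlgAut_apply, Matrix.trace_mul_cycle,
        (Matrix.mem_unitaryGroup_iff').mp h.eigenvectorUnitary.2, Matrix.one_mul]
    rw [htr, Matrix.trace_diagonal] at hdiag
    have : ((∑ p, h.eigenvalues p : ℝ) : ℂ) = 1 := by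
      push_cast
      rw [hdiag]
      rfl
    exact_mod_cast this
  -- counting
  set P : (Fin n × Fin n) → Prop := fun p => h.eigenvalues p = (n : ℝ)⁻¹ with hP
  set s : Finset (Fin n × Fin n) := Finset.univ.filter P with hs
  set t : Finset (Fin n × Fin n) := Finset.univ.filter (fun p => ¬ P p) with ht
  set K := n * n with hK
  have hcard : s.card + t.card = K := by
    rw [hs, ht, Finset.card_filter_add_card_filter_not]
    simp [hK]
  have hneg : ∀ p ∈ t, h.eigenvalues p = -(n : ℝ)⁻¹ := by
    intro p hp
    rcases heig p with h0 | h0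
    · exact absurd h0 (by simpa [ht, hP] using hp)
    · exact h0
  have hsum' : (s.card : ℝ) * (n : ℝ)⁻¹ + (t.card : ℝ) * (-(n : ℝ)⁻¹) = 1 := by
    have := Finset.sum_filter_add_sum_filter_not Finset.univ P h.eigenvalues
    rw [hsum] at this
    rw [← this]
    congr 1
    · rw [Finset.sum_congr rfl (fun p hp => by simpa [hs, hP] using (Finset.mem_filter.mp hp).2),
        Finset.sum_const, nsmul_eq_mul]
    · rw [Finset.sum_congr rfl (fun p hp => hneg p hp), Finset.sum_const, nsmul_eq_mul]
  have hdiff : (s.card : ℝ) = (t.card : ℝ) + n := by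
    have hmul := congrArg (fun x : ℝ => x * n) hsum'
    field_simp at hmul
    linarith
  have hdiffN : s.card = t.card + n := by exact_mod_cast hdiff
  have e1 : n * (n + 1) = K + n := by rw [hK]; ring
  have e2 : n * (n - 1) = K - n := by rw [hK, Nat.mul_sub, mul_one]
  have hscard : s.card = n * (n + 1) / 2 := by rw [e1]; omega
  have htcard : t.card = n * (n - 1) / 2 := by
    rw [e2]
    have hKn : n ≤ K := by rw [hK]; nlinarith
    omega
  -- multiset bookkeeping
  have hsplit : (Finset.univ.val : Multiset (Fin n × Fin n))
      = Multiset.filter P Finset.univ.val + Multiset.filter (fun p => ¬ P p) Finset.univ.val :=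
    (Multiset.filter_add_not P Finset.univ.val).symm
  rw [hsplit, Multiset.map_add]
  congr 1
  · rw [← hscard]
    refine Multiset.eq_replicate.mpr ⟨?_, ?_⟩
    · rw [Multiset.card_map]
      rfl
    · intro b hb
      obtain ⟨a, ha, rfl⟩ := Multiset.mem_map.mp hb
      exact (Multiset.mem_filter.mp ha).2
  · rw [← htcard]
    refine Multiset.eq_replicate.mpr ⟨?_, ?_⟩
    · rw [Multiset.card_map]
      rfl
    · intro b hb
      obtain ⟨a, ha, rfl⟩ := Multiset.mem_map.mp hb
      exact hneg a (by simp [ht, (Multiset.mem_filter.mp ha).2])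
end
end

section
/- Let n ≥ 1 and let ψ : Fin n × Fin n → ℂ be a maximally entangled unit vector. Then for every integer k ≥ 1, the k-th PT-moment satisfies Tr[((ψψᴴ)^{T_A})^k] = ((n+1) + (n−1)·(−1)^k) / (2·n^{k−1}). -/
open Matrix Polynomial
open scoped ComplexOrder

noncomputable section

theorem stmt8 (n : ℕ) (hn : 1 ≤ n) (ψ : Fin n × Fin n → ℂ)
    (hψ : IsUnitVec ψ) (hME : MaxEntangled ψ) (k : ℕ) (hk : 1 ≤ k) :
    Matrix.trace ((ptA (proj ψ)) ^ k) =
      (((n : ℂ) + 1) + ((n : ℂ) - 1) * (-1) ^ k) / (2 * (n : ℂ) ^ (k - 1)) := by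
  classical
  have hn0 : (n : ℂ) ≠ 0 := Nat.cast_ne_zero.mpr (by omega)
  set Ψ : Matrix (Fin n) (Fin n) ℂ := fun i j => ψ (i, j) with hΨ
  -- reduced A fact
  have hA : Ψ * Ψᴴ = ((n : ℂ))⁻¹ • 1 := by
    have := hME
    unfold MaxEntangled reducedA at this
    ext i k
    have h1 : (Ψ * Ψᴴ) i k = ∑ j, ψ (i, j) * (starRingEnd ℂ) (ψ (k, j)) := by
      rw [Matrix.mul_apply]; rfl
    rw [h1, ← this]
  have hB : Ψᴴ * Ψ = ((n : ℂ))⁻¹ • 1 := by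
    have h1 : ((n : ℂ) • Ψ) * Ψᴴ = 1 := by
      rw [Matrix.smul_mul, hA, smul_smul, mul_inv_cancel₀ hn0, one_smul]
    have h2 : Ψᴴ * ((n : ℂ) • Ψ) = 1 := mul_eq_one_comm.mp h1
    rw [Matrix.mul_smul] at h2
    calc Ψᴴ * Ψ = ((n:ℂ))⁻¹ • ((n:ℂ) • (Ψᴴ * Ψ)) := by
          rw [smul_smul, inv_mul_cancel₀ hn0, one_smul]
      _ = ((n:ℂ))⁻¹ • 1 := by rw [h2]
  set N : Matrix (Fin n × Fin n) (Fin n × Fin n) ℂ := ptA (proj ψ) with hN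
  have hNapp : ∀ i j k l, N (i, j) (k, l) = ψ (k, j) * (starRingEnd ℂ) (ψ (i, l)) := by
    intro i j k l; rfl
  -- N^2 = (n^2)⁻¹ • 1
  have hN2 : N ^ 2 = (((n : ℂ) ^ 2)⁻¹) • 1 := by
    ext ⟨i, j⟩ ⟨k, l⟩
    rw [pow_two, Matrix.mul_apply]
    rw [Fintype.sum_prod_type]
    have hsum : ∑ a, ∑ b, N (i,j) (a,b) * N (a,b) (k,l)
        = (∑ a, ψ (a, j) * (starRingEnd ℂ) (ψ (a, l))) *
          (∑ b, (starRingEnd ℂ) (ψ (i, b)) * ψ (k, b)) := by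
      rw [Finset.sum_mul_sum]
      refine Finset.sum_congr rfl fun a _ => Finset.sum_congr rfl fun b _ => ?_
      rw [hNapp, hNapp]; ring
    rw [hsum]
    have hfac1 : (∑ a, ψ (a, j) * (starRingEnd ℂ) (ψ (a, l)))
        = ((n:ℂ))⁻¹ * (if j = l then 1 else 0) := by
      have h1 : ∑ a, (starRingEnd ℂ) (ψ (a,j)) * ψ (a,l)
          = ((n:ℂ))⁻¹ * (if j = l then 1 else 0) := by
        have := congrFun (congrFun hB j) l
        simp only [Matrix.mul_apply, Matrix.smul_apply, Matrix.one_apply, smul_eq_mul] at this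
        rw [← this]
        exact Finset.sum_congr rfl fun a _ => rfl
      have h2 := congrArg (starRingEnd ℂ) h1
      simpa only [map_sum, RingHom.map_mul, Complex.conj_conj, map_inv₀, map_natCast,
        apply_ite (starRingEnd ℂ), _root_.map_one, map_zero] using h2
    have hfac2 : (∑ b, (starRingEnd ℂ) (ψ (i, b)) * ψ (k, b))
        = ((n:ℂ))⁻¹ * (if k = i then 1 else 0) := by
      have := congrFun (congrFun hA k) i
      simp only [Matrix.mul_apply, Matrix.conjTranspose_apply, Matrix.smul_apply,
        Matrix.one_apply, smul_eq_mul] at this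
      rw [← this]
      exact Finset.sum_congr rfl fun b _ => mul_comm _ _
    rw [hfac1, hfac2]
    simp only [Matrix.smul_apply, Matrix.one_apply, smul_eq_mul, Prod.mk.injEq]
    rcases eq_or_ne i k with h1 | h1
    · subst h1
      rcases eq_or_ne j l with h2 | h2
      · subst h2; simp [pow_two, mul_inv]
      · simp [h2]
    · simp [h1, Ne.symm h1]
  -- trace N = 1
  have htr : N.trace = 1 := by
    have h1 : N.trace = ∑ p : Fin n × Fin n, ψ p * (starRingEnd ℂ) (ψ p) := by
      rw [Matrix.trace]
      exact Finset.sum_congr rfl fun p _ => rfl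
    have h2 : ∀ p : Fin n × Fin n, ψ p * (starRingEnd ℂ) (ψ p) = ((‖ψ p‖ ^ 2 : ℝ) : ℂ) := by
      intro p
      rw [Complex.mul_conj]
      norm_cast
      simp [Complex.normSq_eq_norm_sq]
    rw [h1, Finset.sum_congr rfl (fun p _ => h2 p), ← Complex.ofReal_sum]
    unfold IsUnitVec at hψ
    rw [hψ]; norm_num
  -- now compute the trace of powers
  obtain ⟨j, rfl⟩ : ∃ j, k = j + 1 := ⟨k - 1, (Nat.succ_pred_eq_of_pos hk).symm⟩
  simp only [Nat.add_sub_cancel]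
  have hcard : Matrix.trace (1 : Matrix (Fin n × Fin n) (Fin n × Fin n) ℂ) = (n : ℂ) ^ 2 := by
    simp [Matrix.trace_one, pow_two]
  rcases Nat.even_or_odd j with ⟨m, hm⟩ | ⟨m, hm⟩
  · -- j = m + m, k = 2m+1 odd
    subst hm
    have hpow : N ^ (m + m + 1) = ((((n:ℂ)^2)⁻¹)^m) • N := by
      rw [pow_succ, ← two_mul, pow_mul, hN2, _root_.smul_pow, one_pow, Matrix.smul_mul, one_mul]
    rw [hpow, Matrix.trace_smul, htr, smul_eq_mul, mul_one]
    have h1 : ((-1 : ℂ)) ^ (m + m + 1) = -1 := by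
      rw [pow_succ, ← two_mul, pow_mul]; norm_num
    rw [h1, ← inv_pow, ← pow_mul]
    have h2 : (n:ℂ) ^ (2 * m) ≠ 0 := pow_ne_zero _ hn0
    field_simp
    ring_nf
    rw [← mul_pow, mul_inv_cancel₀ hn0, one_pow, one_mul]
  · -- j = 2m+1, k = 2m+2 even
    subst hm
    have hpow : N ^ (2 * m + 1 + 1) = ((((n:ℂ)^2)⁻¹)^(m+1)) • 1 := by
      have : 2 * m + 1 + 1 = 2 * (m + 1) := by ring
      rw [this, pow_mul, hN2, _root_.smul_pow, one_pow]
    rw [hpow, Matrix.trace_smul, hcard, smul_eq_mul]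
    have h1 : ((-1 : ℂ)) ^ (2 * m + 1 + 1) = 1 := by
      have : 2 * m + 1 + 1 = 2 * (m + 1) := by ring
      rw [this, pow_mul]; norm_num
    rw [h1, ← inv_pow, ← pow_mul]
    have h2 : (n:ℂ) ^ (2 * (m+1)) ≠ 0 := pow_ne_zero _ hn0
    have h3 : (n:ℂ) ^ (2 * m + 1) ≠ 0 := pow_ne_zero _ hn0
    field_simp
    ring_nf
    have e : (n:ℂ)^(m*2) * (n:ℂ)⁻¹^(m*2) = 1 := by rw [← mul_pow, mul_inv_cancel₀ hn0, one_pow]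
    have f : (n:ℂ) * (n:ℂ)⁻¹ = 1 := mul_inv_cancel₀ hn0
    linear_combination (2*(n:ℂ)^3*(n:ℂ)⁻¹^2) * e + 2*(n:ℂ)*((n:ℂ)*(n:ℂ)⁻¹+1) * f
end
end

section
/- Let n ≥ 1 and let x : Fin (n²) → ℝ be a family of real numbers whose power sums satisfy Σ_i (x_i)^k = ((n+1) + (n−1)·(−1)^k) / (2·n^{k−1}) for every k = 1, …, n². Then the multiset {x_i : i ∈ Fin (n²)} consists of the value 1/n with multiplicity n(n+1)/2 and the value −1/n with multiplicity n(n−1)/2. -/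
open Matrix Polynomial
open scoped ComplexOrder

noncomputable section

section PowerSumLemmas

open MvPolynomial in
private lemma esymm_det' (m : ℕ) (x y : Fin m → ℝ)
    (h : ∀ k, 1 ≤ k → k ≤ m → ∑ i, x i ^ k = ∑ i, y i ^ k) :
    ∀ k, k ≤ m → (Finset.univ.val.map x).esymm k = (Finset.univ.val.map y).esymm k := by
  intro k
  induction k using Nat.strong_induction_on with
  | _ k ih =>
    intro hk
    rcases Nat.eq_zero_or_pos k with rfl | hk1
    · simp [Multiset.esymm]
    have hx := congrArg (MvPolynomial.aeval x) (MvPolynomial.mul_esymm_eq_sum (Fin m) ℝ k)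
    have hy := congrArg (MvPolynomial.aeval y) (MvPolynomial.mul_esymm_eq_sum (Fin m) ℝ k)
    simp only [_root_.map_mul, map_sum, map_pow, map_neg, _root_.map_one, map_natCast,
      aeval_esymm_eq_multiset_esymm] at hx hy
    have hP : ∀ a ∈ Finset.HasAntidiagonal.antidiagonal k, a.1 < k →
        MvPolynomial.aeval x (psum (Fin m) ℝ a.2) = MvPolynomial.aeval y (psum (Fin m) ℝ a.2) := by
      intro a ha hlt
      rw [Finset.HasAntidiagonal.mem_antidiagonal] at ha
      have h2 : 1 ≤ a.2 := by omega
      have h3 : a.2 ≤ m := by omega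
      simpa [psum, map_sum] using h a.2 h2 h3
    have hsum : ∑ a ∈ Finset.HasAntidiagonal.antidiagonal k with a.1 < k,
          (-1:ℝ) ^ a.1 * (Finset.univ.val.map x).esymm a.1 * MvPolynomial.aeval x (psum (Fin m) ℝ a.2)
        = ∑ a ∈ Finset.HasAntidiagonal.antidiagonal k with a.1 < k,
          (-1:ℝ) ^ a.1 * (Finset.univ.val.map y).esymm a.1 * MvPolynomial.aeval y (psum (Fin m) ℝ a.2) := by
      refine Finset.sum_congr rfl ?_
      intro a ha
      rw [Finset.mem_filter] at ha
      rw [ih a.1 ha.2 (le_of_lt (lt_of_lt_of_le ha.2 hk)), hP a ha.1 ha.2]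
    have hk0 : (k : ℝ) ≠ 0 := Nat.cast_ne_zero.mpr (by omega)
    have : (k:ℝ) * (Finset.univ.val.map x).esymm k = (k:ℝ) * (Finset.univ.val.map y).esymm k := by
      rw [hx, hy, hsum]
    exact mul_left_cancel₀ hk0 this

private lemma powerSums_inj' (m : ℕ) (x y : Fin m → ℝ)
    (h : ∀ k, 1 ≤ k → k ≤ m → ∑ i, x i ^ k = ∑ i, y i ^ k) :
    Finset.univ.val.map x = Finset.univ.val.map y := by
  set s : Multiset ℝ := Finset.univ.val.map x with hs
  set t : Multiset ℝ := Finset.univ.val.map y with ht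
  have hcs : Multiset.card s = m := by simp [hs]
  have hct : Multiset.card t = m := by simp [ht]
  have hesymm := esymm_det' m x y h
  have hprod : (s.map fun r => Polynomial.X - Polynomial.C r).prod
      = (t.map fun r => Polynomial.X - Polynomial.C r).prod := by
    rw [Multiset.prod_X_sub_X_eq_sum_esymm, Multiset.prod_X_sub_X_eq_sum_esymm, hcs, hct]
    refine Finset.sum_congr rfl fun j hj => ?_
    rw [Finset.mem_range] at hj
    rw [hesymm j (by omega)]
  have := congrArg Polynomial.roots hprod
  rwa [Polynomial.roots_multiset_prod_X_sub_C, Polynomial.roots_multiset_prod_X_sub_C] at this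

private lemma map_univ_step (m t s : ℕ) (c : ℝ) (hts : t + s = m) :
    Finset.univ.val.map (fun i : Fin m => if (i : ℕ) < t then c else -c) =
      Multiset.replicate t c + Multiset.replicate s (-c) := by
  have h1 : (Finset.univ.val.map (Fin.val : Fin m → ℕ)) = Multiset.range m := by
    have h2 := congrArg Finset.val (Fin.map_valEmbedding_univ (n := m))
    rw [Finset.map_val, Nat.Iio_eq_range m, Finset.range_val] at h2; exact h2
  have hval : Finset.univ.val.map (fun i : Fin m => if (i : ℕ) < t then c else -c)
      = (Multiset.range m).map (fun j => if j < t then c else -c) := by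
    rw [← h1, Multiset.map_map]; rfl
  rw [hval, ← hts, Multiset.range_add, Multiset.map_add, Multiset.map_map]
  congr 1
  · rw [Multiset.map_congr rfl (fun j hj => by
      rw [Multiset.mem_range] at hj
      simp [hj] : ∀ j ∈ Multiset.range t, (if j < t then c else -c) = c)]
    simp [Multiset.map_const']
  · rw [Multiset.map_congr rfl (fun j hj => by
      simp [Function.comp] : ∀ j ∈ Multiset.range s,
        ((fun j => if j < t then c else -c) ∘ (t + ·)) j = -c)]
    simp [Multiset.map_const']

end PowerSumLemmas

theorem stmt10 (n : ℕ) (hn : 1 ≤ n) (x : Fin (n ^ 2) → ℝ)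
    (hpow : ∀ k : ℕ, 1 ≤ k → k ≤ n ^ 2 →
      ∑ i, x i ^ k = (((n : ℝ) + 1) + ((n : ℝ) - 1) * (-1) ^ k) / (2 * (n : ℝ) ^ (k - 1))) :
    Finset.univ.val.map x =
      Multiset.replicate (n * (n + 1) / 2) ((n : ℝ))⁻¹ +
        Multiset.replicate (n * (n - 1) / 2) (-((n : ℝ))⁻¹) := by
  set t := n * (n + 1) / 2 with hT
  set s := n * (n - 1) / 2 with hS
  have h2t : 2 * t = n * (n + 1) := Nat.two_mul_div_two_of_even (Nat.even_mul_succ_self n)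
  have h2s : 2 * s = n * (n - 1) := by
    have h : Even (n * (n - 1)) := by
      have h := Nat.even_mul_succ_self (n - 1)
      have e : n - 1 + 1 = n := by omega
      rw [e] at h
      exact (mul_comm (n - 1) n) ▸ h
    exact Nat.two_mul_div_two_of_even h
  have hts : t + s = n ^ 2 := by
    have key : 2 * t = n * n + n := by rw [h2t]; ring
    have key2 : 2 * s + n = n * n := by
      rw [h2s, ← Nat.mul_succ]
      congr 1
      omega
    have hsq : n ^ 2 = n * n := sq n
    rw [hsq]
    set nn := n * n with hnn
    clear_value nn
    omega
  have hn0 : (n:ℝ) ≠ 0 := Nat.cast_ne_zero.mpr (by omega)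
  have h2tr : 2 * (t:ℝ) = (n:ℝ) * ((n:ℝ) + 1) := by exact_mod_cast congrArg (Nat.cast (R := ℝ)) h2t
  have h2sr : 2 * (s:ℝ) = (n:ℝ) * ((n:ℝ) - 1) := by
    have := congrArg (Nat.cast (R := ℝ)) h2s
    push_cast [Nat.cast_sub hn] at this
    exact this
  set c : ℝ := ((n:ℝ))⁻¹ with hc
  set y : Fin (n ^ 2) → ℝ := fun i => if (i : ℕ) < t then c else -c with hy
  have hA : Finset.univ.val.map y = Multiset.replicate t c + Multiset.replicate s (-c) :=
    map_univ_step (n ^ 2) t s c hts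
  have hB : ∀ k, 1 ≤ k → k ≤ n ^ 2 →
      ∑ i, y i ^ k = (((n : ℝ) + 1) + ((n : ℝ) - 1) * (-1) ^ k) / (2 * (n : ℝ) ^ (k - 1)) := by
    intro k hk1 hk2
    obtain ⟨k', rfl⟩ : ∃ k', k = k' + 1 := ⟨k - 1, by omega⟩
    have hsum : ∑ i, y i ^ (k' + 1) = (t:ℝ) * c ^ (k' + 1) + (s:ℝ) * (-c) ^ (k' + 1) := by
      have heq : ∑ i, y i ^ (k' + 1)
          = ((Finset.univ.val.map y).map (fun r => r ^ (k' + 1))).sum := by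
        rw [Multiset.map_map]; rfl
      rw [heq, hA]
      simp [Multiset.map_replicate, Multiset.sum_replicate, nsmul_eq_mul]
    rw [hsum, hc, neg_pow, Nat.add_sub_cancel, eq_div_iff (by positivity)]
    have hAB : ((n:ℝ)⁻¹) ^ (k' + 1) * (n:ℝ) ^ k' = (n:ℝ)⁻¹ := by
      rw [pow_succ, mul_right_comm, ← mul_pow, inv_mul_cancel₀ hn0, one_pow, one_mul]
    have hni : (n:ℝ) * (n:ℝ)⁻¹ = 1 := mul_inv_cancel₀ hn0
    set e : ℝ := (-1 : ℝ) ^ (k' + 1) with he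
    set A : ℝ := ((n:ℝ)⁻¹) ^ (k' + 1) with hAdef
    set B : ℝ := (n:ℝ) ^ k' with hB
    calc ((t:ℝ) * A + (s:ℝ) * (e * A)) * (2 * B)
        = (2*(t:ℝ))*(A*B) + (2*(s:ℝ))*(A*B)*e := by ring
      _ = ((n:ℝ)*((n:ℝ)+1))*(A*B) + ((n:ℝ)*((n:ℝ)-1))*(A*B)*e := by rw [h2tr, h2sr]
      _ = ((n:ℝ)*(A*B))*(((n:ℝ)+1) + ((n:ℝ)-1)*e) := by ring
      _ = ((n:ℝ)+1) + ((n:ℝ)-1)*e := by rw [hAB, hni, one_mul]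
  have hkey := powerSums_inj' (n ^ 2) x y
    (fun k h1 h2 => (hpow k h1 h2).trans (hB k h1 h2).symm)
  rw [hkey, hA]
end
end

section
/- Let ρ be a density matrix on ℂ²⊗ℂ² (a two-qubit state), and define its negativity N(ρ) as the sum over the eigenvalues λ of ρ^{T_A} of max(−λ, 0) (equivalently, the absolute value of the sum of all negative eigenvalues of ρ^{T_A}). Then N(ρ) = 1/2 if and only if ρ is maximally entangled, i.e. ρ = ψψᴴ for some maximally entangled unit vector ψ : Fin 2 × Fin 2 → ℂ. -/
open Matrix Polynomial
open scoped ComplexOrder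

noncomputable section

/-! ### Auxiliary lemmas -/

section Aux

private lemma keyone (x y z w : ℝ) (hx : x ≤ 0) (_hy : 0 ≤ y) (_hz : 0 ≤ z) (_hw : 0 ≤ w)
    (hs : x + y + z + w = 1) (hn : -x = 1/2) (hq : x^2+y^2+z^2+w^2 ≤ 1) :
    x = -(1/2) ∧ y = 1/2 ∧ z = 1/2 ∧ w = 1/2 := by
  have hx' : x = -(1/2) := by linarith
  subst hx'
  have h0 : (y - 1/2)^2 + (z - 1/2)^2 + (w - 1/2)^2 ≤ 0 := by nlinarith
  have hy2 : (y - 1/2)^2 = 0 := by nlinarith [sq_nonneg (z-1/2), sq_nonneg (w-1/2), sq_nonneg (y-1/2)]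
  have hz2 : (z - 1/2)^2 = 0 := by nlinarith [sq_nonneg (z-1/2), sq_nonneg (w-1/2), sq_nonneg (y-1/2)]
  have hw2 : (w - 1/2)^2 = 0 := by nlinarith [sq_nonneg (z-1/2), sq_nonneg (w-1/2), sq_nonneg (y-1/2)]
  have := pow_eq_zero_iff (n := 2) (by norm_num) |>.mp hy2
  have := pow_eq_zero_iff (n := 2) (by norm_num) |>.mp hz2
  have := pow_eq_zero_iff (n := 2) (by norm_num) |>.mp hw2
  refine ⟨rfl, by linarith, by linarith, by linarith⟩

lemma key4 (a b c d : ℝ) (h1 : a + b + c + d = 1)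
    (h2 : max (-a) 0 + max (-b) 0 + max (-c) 0 + max (-d) 0 = 1/2)
    (h3 : a^2 + b^2 + c^2 + d^2 ≤ 1) :
    a^2 + b^2 + c^2 + d^2 = 1 ∧ a*b*c*d = -(1/16) := by
  rcases le_total a 0 with ha | ha <;> rcases le_total b 0 with hb | hb <;>
    rcases le_total c 0 with hc | hc <;> rcases le_total d 0 with hd | hd
  · rw [max_eq_left (neg_nonneg.2 ha), max_eq_left (neg_nonneg.2 hb), max_eq_left (neg_nonneg.2 hc), max_eq_left (neg_nonneg.2 hd)] at h2
    exfalso; linarith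
  · rw [max_eq_left (neg_nonneg.2 ha), max_eq_left (neg_nonneg.2 hb), max_eq_left (neg_nonneg.2 hc), max_eq_right (neg_nonpos.2 hd)] at h2
    exfalso; nlinarith [sq_nonneg (a+b+c)]
  · rw [max_eq_left (neg_nonneg.2 ha), max_eq_left (neg_nonneg.2 hb), max_eq_right (neg_nonpos.2 hc), max_eq_left (neg_nonneg.2 hd)] at h2
    exfalso; nlinarith [sq_nonneg (a+b+d)]
  · rw [max_eq_left (neg_nonneg.2 ha), max_eq_left (neg_nonneg.2 hb), max_eq_right (neg_nonpos.2 hc), max_eq_right (neg_nonpos.2 hd)] at h2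
    exfalso; nlinarith [sq_nonneg (a+b), sq_nonneg (c-d)]
  · rw [max_eq_left (neg_nonneg.2 ha), max_eq_right (neg_nonpos.2 hb), max_eq_left (neg_nonneg.2 hc), max_eq_left (neg_nonneg.2 hd)] at h2
    exfalso; nlinarith [sq_nonneg (a+c+d)]
  · rw [max_eq_left (neg_nonneg.2 ha), max_eq_right (neg_nonpos.2 hb), max_eq_left (neg_nonneg.2 hc), max_eq_right (neg_nonpos.2 hd)] at h2
    exfalso; nlinarith [sq_nonneg (a+c), sq_nonneg (b-d)]
  · rw [max_eq_left (neg_nonneg.2 ha), max_eq_right (neg_nonpos.2 hb), max_eq_right (neg_nonpos.2 hc), max_eq_left (neg_nonneg.2 hd)] at h2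
    exfalso; nlinarith [sq_nonneg (a+d), sq_nonneg (b-c)]
  · rw [max_eq_left (neg_nonneg.2 ha), max_eq_right (neg_nonpos.2 hb), max_eq_right (neg_nonpos.2 hc), max_eq_right (neg_nonpos.2 hd)] at h2
    obtain ⟨e1,e2,e3,e4⟩ := keyone a b c d ha hb hc hd (by linarith) (by linarith) (by nlinarith)
    subst e1; subst e2; subst e3; subst e4; norm_num
  · rw [max_eq_right (neg_nonpos.2 ha), max_eq_left (neg_nonneg.2 hb), max_eq_left (neg_nonneg.2 hc), max_eq_left (neg_nonneg.2 hd)] at h2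
    exfalso; nlinarith [sq_nonneg (b+c+d)]
  · rw [max_eq_right (neg_nonpos.2 ha), max_eq_left (neg_nonneg.2 hb), max_eq_left (neg_nonneg.2 hc), max_eq_right (neg_nonpos.2 hd)] at h2
    exfalso; nlinarith [sq_nonneg (b+c), sq_nonneg (a-d)]
  · rw [max_eq_right (neg_nonpos.2 ha), max_eq_left (neg_nonneg.2 hb), max_eq_right (neg_nonpos.2 hc), max_eq_left (neg_nonneg.2 hd)] at h2
    exfalso; nlinarith [sq_nonneg (b+d), sq_nonneg (a-c)]
  · rw [max_eq_right (neg_nonpos.2 ha), max_eq_left (neg_nonneg.2 hb), max_eq_right (neg_nonpos.2 hc), max_eq_right (neg_nonpos.2 hd)] at h2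
    obtain ⟨e1,e2,e3,e4⟩ := keyone b a c d hb ha hc hd (by linarith) (by linarith) (by nlinarith)
    subst e1; subst e2; subst e3; subst e4; norm_num
  · rw [max_eq_right (neg_nonpos.2 ha), max_eq_right (neg_nonpos.2 hb), max_eq_left (neg_nonneg.2 hc), max_eq_left (neg_nonneg.2 hd)] at h2
    exfalso; nlinarith [sq_nonneg (c+d), sq_nonneg (a-b)]
  · rw [max_eq_right (neg_nonpos.2 ha), max_eq_right (neg_nonpos.2 hb), max_eq_left (neg_nonneg.2 hc), max_eq_right (neg_nonpos.2 hd)] at h2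
    obtain ⟨e1,e2,e3,e4⟩ := keyone c a b d hc ha hb hd (by linarith) (by linarith) (by nlinarith)
    subst e1; subst e2; subst e3; subst e4; norm_num
  · rw [max_eq_right (neg_nonpos.2 ha), max_eq_right (neg_nonpos.2 hb), max_eq_right (neg_nonpos.2 hc), max_eq_left (neg_nonneg.2 hd)] at h2
    obtain ⟨e1,e2,e3,e4⟩ := keyone d a b c hd ha hb hc (by linarith) (by linarith) (by nlinarith)
    subst e1; subst e2; subst e3; subst e4; norm_num
  · rw [max_eq_right (neg_nonpos.2 ha), max_eq_right (neg_nonpos.2 hb), max_eq_right (neg_nonpos.2 hc), max_eq_right (neg_nonpos.2 hd)] at h2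
    exfalso; linarith

lemma trace_eq_sum_eig {n : Type*} [Fintype n] [DecidableEq n] {A : Matrix n n ℂ}
    (hA : A.IsHermitian) : A.trace = ∑ i, (hA.eigenvalues i : ℂ) := by
  conv_lhs => rw [hA.spectral_theorem, Unitary.conjStarAlgAut_apply]
  rw [Matrix.trace_mul_cycle,
    (Matrix.mem_unitaryGroup_iff').mp (hA.eigenvectorUnitary).2, Matrix.one_mul,
    Matrix.trace_diagonal]
  rfl

lemma trace_sq_eq_sum_eig {n : Type*} [Fintype n] [DecidableEq n] {A : Matrix n n ℂ}
    (hA : A.IsHermitian) : (A * A).trace = ∑ i, ((hA.eigenvalues i : ℂ))^2 := by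
  set U : Matrix n n ℂ := (hA.eigenvectorUnitary : Matrix n n ℂ) with hUdef
  set D : Matrix n n ℂ := Matrix.diagonal (RCLike.ofReal ∘ hA.eigenvalues)
  have hU : star U * U = 1 := (Matrix.mem_unitaryGroup_iff').mp (hA.eigenvectorUnitary).2
  have : A * A = U * (D * D) * star U := by
    conv_lhs => rw [hA.spectral_theorem, Unitary.conjStarAlgAut_apply]
    calc (U * D * star U) * (U * D * star U)
        = U * D * (star U * U) * (D * star U) := by noncomm_ring
      _ = U * (D * D) * star U := by rw [hU]; noncomm_ring
  rw [this, Matrix.trace_mul_cycle, ← Matrix.mul_assoc, hU, Matrix.one_mul]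
  rw [Matrix.diagonal_mul_diagonal, Matrix.trace_diagonal]
  simp [sq]

lemma det_fin_four {R : Type*} [CommRing R] (A : Matrix (Fin 4) (Fin 4) R) :
    det A =
      A 0 0 * (A 1 1 * (A 2 2 * A 3 3 - A 2 3 * A 3 2) - A 1 2 * (A 2 1 * A 3 3 - A 2 3 * A 3 1)
        + A 1 3 * (A 2 1 * A 3 2 - A 2 2 * A 3 1))
      - A 0 1 * (A 1 0 * (A 2 2 * A 3 3 - A 2 3 * A 3 2) - A 1 2 * (A 2 0 * A 3 3 - A 2 3 * A 3 0)
        + A 1 3 * (A 2 0 * A 3 2 - A 2 2 * A 3 0))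
      + A 0 2 * (A 1 0 * (A 2 1 * A 3 3 - A 2 3 * A 3 1) - A 1 1 * (A 2 0 * A 3 3 - A 2 3 * A 3 0)
        + A 1 3 * (A 2 0 * A 3 1 - A 2 1 * A 3 0))
      - A 0 3 * (A 1 0 * (A 2 1 * A 3 2 - A 2 2 * A 3 1) - A 1 1 * (A 2 0 * A 3 2 - A 2 2 * A 3 0)
        + A 1 2 * (A 2 0 * A 3 1 - A 2 1 * A 3 0)) := by
  rw [Matrix.det_succ_row_zero]
  simp [Fin.sum_univ_succ, Matrix.det_fin_three, Fin.succ_succ_ne_one,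
    show (Fin.succ 2 : Fin 4) = 3 from rfl,
    show (Fin.castSucc 2 : Fin 4) = 2 from rfl,
    show ((2 : Fin 4).succAbove 2) = 3 from by decide, show ((3 : Fin 4).succAbove 2) = 2 from by decide,
    show ((1 : Fin 4).succAbove 2) = 3 from by decide]
  ring

lemma det_ptA_proj (ψ : Fin 2 × Fin 2 → ℂ) :
    (ptA (proj ψ)).det =
      -(((ψ (0,0) * ψ (1,1) - ψ (0,1) * ψ (1,0)) *
        (starRingEnd ℂ) (ψ (0,0) * ψ (1,1) - ψ (0,1) * ψ (1,0)))^2) := by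
  have hre : (ptA (proj ψ)).det =
      ((ptA (proj ψ)).submatrix (finProdFinEquiv (m := 2) (n := 2)).symm
        (finProdFinEquiv (m := 2) (n := 2)).symm).det :=
    (Matrix.det_submatrix_equiv_self _ _).symm
  have e0 : (finProdFinEquiv (m := 2) (n := 2)).symm 0 = (0, 0) := by decide
  have e1 : (finProdFinEquiv (m := 2) (n := 2)).symm 1 = (0, 1) := by decide
  have e2 : (finProdFinEquiv (m := 2) (n := 2)).symm 2 = (1, 0) := by decide
  have e3 : (finProdFinEquiv (m := 2) (n := 2)).symm 3 = (1, 1) := by decide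
  rw [hre, det_fin_four]
  simp only [Matrix.submatrix_apply, e0, e1, e2, e3, ptA, proj, Matrix.vecMulVec_apply,
    Pi.star_apply, RCLike.star_def, map_sub, _root_.map_mul]
  ring

/-- A PSD matrix with trace 1 and trace of square 1 is a rank-one projection. -/
lemma pure_of_trace_sq {k : Type*} [Fintype k] [DecidableEq k] {ρ : Matrix k k ℂ}
    (hPSD : ρ.PosSemidef) (htr : ρ.trace = 1) (htr2 : (ρ * ρ).trace = 1) :
    ∃ ψ : k → ℂ, IsUnitVec ψ ∧ ρ = proj ψ := by
  have hH : ρ.IsHermitian := hPSD.1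
  set μ := hH.eigenvalues with hμ
  have hnn : ∀ i, 0 ≤ μ i := fun i => hPSD.eigenvalues_nonneg i
  have hsum : ∑ i, μ i = 1 := by
    have := trace_eq_sum_eig hH
    rw [htr] at this
    have : ((∑ i, μ i : ℝ) : ℂ) = 1 := by push_cast; rw [← this]
    exact_mod_cast this
  have hsum2 : ∑ i, (μ i)^2 = 1 := by
    have := trace_sq_eq_sum_eig hH
    rw [htr2] at this
    have : ((∑ i, (μ i)^2 : ℝ) : ℂ) = 1 := by push_cast; rw [← this]
    exact_mod_cast this
  have hle1 : ∀ i, μ i ≤ 1 := by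
    intro i
    rw [← hsum]
    exact Finset.single_le_sum (fun j _ => hnn j) (Finset.mem_univ i)
  have hzero : ∀ i ∈ Finset.univ, μ i - (μ i)^2 = 0 := by
    refine (Finset.sum_eq_zero_iff_of_nonneg ?_).mp ?_
    · intro i _; nlinarith [hnn i, hle1 i]
    · rw [Finset.sum_sub_distrib, hsum, hsum2]; ring
  have h01 : ∀ i, μ i = 0 ∨ μ i = 1 := by
    intro i
    have := hzero i (Finset.mem_univ i)
    rcases mul_eq_zero.mp (show μ i * (1 - μ i) = 0 by nlinarith) with h | h
    · exact Or.inl h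
    · exact Or.inr (by linarith)
  obtain ⟨i₀, -, hi₀⟩ : ∃ i ∈ Finset.univ, μ i ≠ 0 :=
    Finset.exists_ne_zero_of_sum_ne_zero (by rw [hsum]; norm_num)
  have hone : μ i₀ = 1 := (h01 i₀).resolve_left hi₀
  have hothers : ∀ j, j ≠ i₀ → μ j = 0 := by
    intro j hj
    have hrest : ∑ i ∈ Finset.univ.erase i₀, μ i = 0 := by
      have := Finset.add_sum_erase Finset.univ μ (Finset.mem_univ i₀)
      rw [hsum, hone] at this; linarith
    have := (Finset.sum_eq_zero_iff_of_nonneg (fun i _ => hnn i)).mp hrest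
    exact this j (Finset.mem_erase.mpr ⟨hj, Finset.mem_univ j⟩)
  set U : Matrix k k ℂ := (hH.eigenvectorUnitary : Matrix k k ℂ) with hU
  have hUu : star U * U = 1 := (Matrix.mem_unitaryGroup_iff').mp (hH.eigenvectorUnitary).2
  refine ⟨fun p => U p i₀, ?_, ?_⟩
  · have := congrFun (congrFun hUu i₀) i₀
    rw [Matrix.mul_apply] at this
    simp only [Matrix.one_apply_eq] at this
    have hre : (((∑ p, ‖U p i₀‖^2 : ℝ)) : ℂ) = 1 := by
      rw [← this]
      push_cast
      refine Finset.sum_congr rfl fun p _ => ?_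
      rw [Matrix.star_apply]
      rw [show (star (U p i₀) * U p i₀ : ℂ) = (Complex.normSq (U p i₀) : ℂ) by
        rw [Complex.star_def, ← Complex.normSq_eq_conj_mul_self]]
      rw [Complex.normSq_eq_norm_sq]
      norm_num
    exact_mod_cast hre
  · have hspec := hH.spectral_theorem
    funext p q
    rw [hspec, Unitary.conjStarAlgAut_apply]
    rw [Matrix.mul_apply]
    have : ∀ a, ((U * Matrix.diagonal (RCLike.ofReal ∘ hH.eigenvalues) : Matrix k k ℂ)) p a * (star U) a q
        = U p a * (μ a : ℂ) * (starRingEnd ℂ) (U q a) := by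
      intro a
      rw [Matrix.mul_diagonal, Matrix.star_apply]
      rfl
    rw [Finset.sum_congr rfl (fun a _ => this a)]
    rw [Finset.sum_eq_single i₀]
    · simp [hone, proj, Matrix.vecMulVec_apply]
    · intro b _ hb; simp [hothers b hb]
    · intro hmem; exact absurd (Finset.mem_univ i₀) hmem

lemma ptA_proj_sq (ψ : Fin 2 × Fin 2 → ℂ) (hME : MaxEntangled ψ) :
    ptA (proj ψ) * ptA (proj ψ) = ((4 : ℂ))⁻¹ • 1 := by
  set N : Matrix (Fin 2) (Fin 2) ℂ := Matrix.of fun i j => ψ (i, j) with hN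
  have hNN : N * Nᴴ = ((2 : ℂ))⁻¹ • 1 := by
    have : reducedA ψ = N * Nᴴ := by
      funext i k
      rw [Matrix.mul_apply]
      rfl
    rw [← this]
    simpa [MaxEntangled] using hME
  have hNN' : Nᴴ * N = ((2 : ℂ))⁻¹ • 1 := by
    have h1 : N * ((2 : ℂ) • Nᴴ) = 1 := by
      rw [Matrix.mul_smul, hNN, smul_smul]
      norm_num
    have h2 : ((2 : ℂ) • Nᴴ) * N = 1 := mul_eq_one_comm.mp h1
    rw [Matrix.smul_mul] at h2
    rw [← h2, smul_smul]
    norm_num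
  have hC : ∀ j l : Fin 2, (∑ a, ψ (a, j) * (starRingEnd ℂ) (ψ (a, l)))
      = if j = l then ((2:ℂ))⁻¹ else 0 := by
    intro j l
    have hconj : (∑ a, ψ (a, j) * (starRingEnd ℂ) (ψ (a, l)))
        = (starRingEnd ℂ) ((Nᴴ * N) j l) := by
      rw [Matrix.mul_apply, map_sum]
      refine Finset.sum_congr rfl fun a _ => ?_
      simp [Matrix.conjTranspose_apply, hN, mul_comm]
    rw [hconj, hNN']
    by_cases hjl : j = l <;> simp [hjl, Matrix.smul_apply, Matrix.one_apply, Complex.conj_ofNat]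
  have hB : ∀ i k : Fin 2, (∑ b, ψ (i, b) * (starRingEnd ℂ) (ψ (k, b)))
      = if i = k then ((2:ℂ))⁻¹ else 0 := by
    intro i k
    have := congrFun (congrFun hNN k) i
    rw [Matrix.mul_apply] at this
    rw [show (∑ b, ψ (i, b) * (starRingEnd ℂ) (ψ (k, b))) = (N * Nᴴ) i k from rfl, hNN]
    by_cases hik : i = k <;> simp_all [Matrix.smul_apply, Matrix.one_apply]
  funext p q
  rw [Matrix.mul_apply]
  have factor : ∑ r : Fin 2 × Fin 2, ptA (proj ψ) p r * ptA (proj ψ) r q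
      = (∑ a, ψ (a, p.2) * (starRingEnd ℂ) (ψ (a, q.2)))
        * (∑ b, ψ (q.1, b) * (starRingEnd ℂ) (ψ (p.1, b))) := by
    rw [Finset.sum_mul_sum, Fintype.sum_prod_type]
    refine Finset.sum_congr rfl fun a _ => Finset.sum_congr rfl fun b _ => ?_
    simp only [ptA, proj, Matrix.vecMulVec_apply, Pi.star_apply, RCLike.star_def]
    ring
  rw [factor, hC, hB]
  rcases p with ⟨p1, p2⟩; rcases q with ⟨q1, q2⟩
  by_cases h1 : p2 = q2 <;> by_cases h2 : q1 = p1 <;>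
    simp [h1, h2, Matrix.smul_apply, Matrix.one_apply, Prod.ext_iff, eq_comm (a := p1)] <;> norm_num

lemma maxent_of (ψ : Fin 2 × Fin 2 → ℂ) (hunit : IsUnitVec ψ)
    (hdet : Complex.normSq (ψ (0,0) * ψ (1,1) - ψ (0,1) * ψ (1,0)) = 1/4) :
    MaxEntangled ψ := by
  set r0 : ℝ := Complex.normSq (ψ (0,0)) + Complex.normSq (ψ (0,1)) with hr0
  set r1 : ℝ := Complex.normSq (ψ (1,0)) + Complex.normSq (ψ (1,1)) with hr1
  set q01 : ℂ := ψ (0,0) * (starRingEnd ℂ) (ψ (1,0)) + ψ (0,1) * (starRingEnd ℂ) (ψ (1,1)) with hq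
  have hr0c : (r0 : ℂ) = ψ (0,0) * (starRingEnd ℂ) (ψ (0,0)) + ψ (0,1) * (starRingEnd ℂ) (ψ (0,1)) := by
    push_cast [hr0]; rw [Complex.mul_conj, Complex.mul_conj]
  have hr1c : (r1 : ℂ) = ψ (1,0) * (starRingEnd ℂ) (ψ (1,0)) + ψ (1,1) * (starRingEnd ℂ) (ψ (1,1)) := by
    push_cast [hr1]; rw [Complex.mul_conj, Complex.mul_conj]
  have hsum : r0 + r1 = 1 := by
    have := hunit
    rw [IsUnitVec, Fintype.sum_prod_type, Fin.sum_univ_two, Fin.sum_univ_two, Fin.sum_univ_two] at this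
    simp only [← Complex.sq_norm] at hr0 hr1 ⊢
    linarith [this]
  have hdet2 : r0 * r1 - Complex.normSq q01 = 1/4 := by
    have hid : ((r0 : ℂ)) * ((r1 : ℂ)) - q01 * (starRingEnd ℂ) q01
        = (ψ (0,0) * ψ (1,1) - ψ (0,1) * ψ (1,0))
          * (starRingEnd ℂ) (ψ (0,0) * ψ (1,1) - ψ (0,1) * ψ (1,0)) := by
      rw [hr0c, hr1c, hq]
      simp only [map_add, map_sub, _root_.map_mul, Complex.conj_conj]
      ring
    rw [Complex.mul_conj, Complex.mul_conj, hdet] at hid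
    exact_mod_cast hid
  have hnq : Complex.normSq q01 = 0 := by
    nlinarith [Complex.normSq_nonneg q01, sq_nonneg (r0 - r1), Complex.normSq_nonneg (ψ (0,0)),
      Complex.normSq_nonneg (ψ (0,1)), Complex.normSq_nonneg (ψ (1,0)), Complex.normSq_nonneg (ψ (1,1))]
  have hq0 : q01 = 0 := Complex.normSq_eq_zero.mp hnq
  have hr0half : r0 = 1/2 := by
    nlinarith [sq_nonneg (r0 - r1)]
  have hr1half : r1 = 1/2 := by linarith
  have hq0' : ψ (1,0) * (starRingEnd ℂ) (ψ (0,0)) + ψ (1,1) * (starRingEnd ℂ) (ψ (0,1)) = 0 := by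
    have := congrArg (starRingEnd ℂ) hq0
    rw [hq] at this
    simp only [map_add, _root_.map_mul, Complex.conj_conj, map_zero] at this
    rw [← this]; ring
  rw [MaxEntangled]
  funext i k
  fin_cases i <;> fin_cases k <;>
    simp only [reducedA, Fin.sum_univ_two, Matrix.smul_apply, Matrix.one_apply, Fin.isValue,
      show ((0 : Fin 2 × Fin 2)) = ((0 : Fin 2), (0 : Fin 2)) from rfl,
      show ((1 : Fin 2 × Fin 2)) = ((1 : Fin 2), (1 : Fin 2)) from rfl] <;> norm_num
  · exact (show ψ ((0:Fin 2),(0:Fin 2)) * (starRingEnd ℂ) (ψ (0,0)) + ψ (0,1) * (starRingEnd ℂ) (ψ (0,1)) = 1/2 by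
      rw [← hr0c, hr0half]; norm_num)
  · exact hq0
  · exact hq0'
  · exact (show ψ (1,0) * (starRingEnd ℂ) (ψ (1,0)) + ψ ((1:Fin 2),(1:Fin 2)) * (starRingEnd ℂ) (ψ (1,1)) = 1/2 by
      rw [← hr1c, hr1half]; norm_num)

lemma sum4 {M : Type*} [AddCommMonoid M] (f : Fin 2 × Fin 2 → M) :
    ∑ p, f p = f (0,0) + f (0,1) + f (1,0) + f (1,1) := by
  rw [Fintype.sum_prod_type, Fin.sum_univ_two, Fin.sum_univ_two, Fin.sum_univ_two]
  abel

lemma prod4 {M : Type*} [CommMonoid M] (f : Fin 2 × Fin 2 → M) :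
    ∏ p, f p = f (0,0) * f (0,1) * f (1,0) * f (1,1) := by
  rw [Fintype.prod_prod_type, Fin.prod_univ_two, Fin.prod_univ_two, Fin.prod_univ_two]
  simp only [mul_assoc]

lemma trace_proj {k : Type*} [Fintype k] [DecidableEq k] (ψ : k → ℂ) :
    (proj ψ).trace = ((∑ p, ‖ψ p‖ ^ 2 : ℝ) : ℂ) := by
  rw [Matrix.trace]
  push_cast
  refine Finset.sum_congr rfl fun p _ => ?_
  simp only [Matrix.diag, proj, Matrix.vecMulVec_apply, Pi.star_apply, RCLike.star_def]
  rw [Complex.mul_conj, Complex.normSq_eq_norm_sq]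
  norm_num

end Aux
theorem stmt14 (ρ : Matrix (Fin 2 × Fin 2) (Fin 2 × Fin 2) ℂ) (hρ : IsDensityMatrix ρ)
    (h : (ptA ρ).IsHermitian) :
    (∑ i, max (-(h.eigenvalues i)) 0) = 1/2 ↔
      ∃ ψ : Fin 2 × Fin 2 → ℂ, IsUnitVec ψ ∧ MaxEntangled ψ ∧ ρ = proj ψ := by
  have hPSD := hρ.1
  have htrρ := hρ.2
  have hρH : ρ.IsHermitian := hPSD.1
  have htrA : (ptA ρ).trace = 1 := by rw [trace_ptA, htrρ]
  have hsum_eC : ∑ i, (h.eigenvalues i : ℂ) = 1 := by rw [← trace_eq_sum_eig h, htrA]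
  have hsum_e : ∑ i, h.eigenvalues i = 1 := by
    have : ((∑ i, h.eigenvalues i : ℝ) : ℂ) = 1 := by push_cast; exact hsum_eC
    exact_mod_cast this
  constructor
  · intro hneg
    have hμnn : ∀ i, 0 ≤ hρH.eigenvalues i := fun i => hPSD.eigenvalues_nonneg i
    have hμsum : ∑ i, hρH.eigenvalues i = 1 := by
      have h' : ∑ i, (hρH.eigenvalues i : ℂ) = 1 := by rw [← trace_eq_sum_eig hρH, htrρ]
      have : ((∑ i, hρH.eigenvalues i : ℝ) : ℂ) = 1 := by push_cast; exact h'
      exact_mod_cast this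
    have hμle1 : ∀ i, hρH.eigenvalues i ≤ 1 := by
      intro i
      rw [← hμsum]
      exact Finset.single_le_sum (fun j _ => hμnn j) (Finset.mem_univ i)
    have hμsq_le : ∑ i, (hρH.eigenvalues i)^2 ≤ 1 := by
      calc ∑ i, (hρH.eigenvalues i)^2 ≤ ∑ i, hρH.eigenvalues i :=
            Finset.sum_le_sum (fun i _ => by nlinarith [hμnn i, hμle1 i])
        _ = 1 := hμsum
    have hlinkC : ∑ i, ((h.eigenvalues i : ℂ))^2 = ∑ i, ((hρH.eigenvalues i : ℂ))^2 := by
      rw [← trace_sq_eq_sum_eig h, ← trace_sq_eq_sum_eig hρH, trace_ptA_sq]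
    have hlink : ∑ i, (h.eigenvalues i)^2 = ∑ i, (hρH.eigenvalues i)^2 := by
      have : ((∑ i, (h.eigenvalues i)^2 : ℝ) : ℂ) = ((∑ i, (hρH.eigenvalues i)^2 : ℝ) : ℂ) := by
        push_cast; exact hlinkC
      exact_mod_cast this
    have h3 : (h.eigenvalues (0,0))^2 + (h.eigenvalues (0,1))^2 + (h.eigenvalues (1,0))^2
        + (h.eigenvalues (1,1))^2 ≤ 1 := by
      rw [← sum4 (fun i => (h.eigenvalues i)^2)]
      rw [hlink]; exact hμsq_le
    rw [sum4] at hsum_e hneg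
    obtain ⟨hq2, hprod⟩ := key4 _ _ _ _ hsum_e hneg h3
    have hesq : ∑ i, (h.eigenvalues i)^2 = 1 := by
      rw [sum4 (fun i => (h.eigenvalues i)^2)]; exact hq2
    have htr2 : (ρ * ρ).trace = 1 := by
      rw [trace_sq_eq_sum_eig hρH]
      have : ((∑ i, (hρH.eigenvalues i)^2 : ℝ) : ℂ) = 1 := by
        rw [← hlink, hesq]; norm_num
      rw [← this]; push_cast; ring
    obtain ⟨ψ, hunit, hproj⟩ := pure_of_trace_sq hPSD htrρ htr2
    have hdetA : (ptA ρ).det = ((-(1/16) : ℝ) : ℂ) := by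
      rw [h.det_eq_prod_eigenvalues]
      norm_cast
      rw [prod4]
      exact congrArg _ hprod
    have hdet' : Complex.normSq (ψ (0,0) * ψ (1,1) - ψ (0,1) * ψ (1,0)) = 1/4 := by
      rw [hproj] at hdetA
      rw [det_ptA_proj] at hdetA
      set d := ψ (0,0) * ψ (1,1) - ψ (0,1) * ψ (1,0) with hd
      rw [Complex.mul_conj] at hdetA
      have hre : ((Complex.normSq d)^2 : ℝ) = 1/16 := by
        have : (((Complex.normSq d)^2 : ℝ) : ℂ) = ((1/16 : ℝ) : ℂ) := by
          push_cast
          have h16 := hdetA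
          push_cast at h16
          linear_combination -h16
        exact_mod_cast this
      nlinarith [Complex.normSq_nonneg d]
    exact ⟨ψ, hunit, maxent_of ψ hunit hdet', hproj⟩
  · rintro ⟨ψ, hunit, hME, rfl⟩
    have hsq := ptA_proj_sq ψ hME
    have heig : ∀ i, h.eigenvalues i = 1/2 ∨ h.eigenvalues i = -(1/2) := by
      intro i
      set w : Fin 2 × Fin 2 → ℂ := ⇑(h.eigenvectorBasis i) with hw
      have hv := h.mulVec_eigenvectorBasis i
      have h2 : (ptA (proj ψ) * ptA (proj ψ)) *ᵥ w = ((4:ℂ))⁻¹ • w := by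
        rw [hsq, Matrix.smul_mulVec, Matrix.one_mulVec]
      have h2' : (ptA (proj ψ) * ptA (proj ψ)) *ᵥ w
          = h.eigenvalues i • (h.eigenvalues i • w) := by
        rw [← Matrix.mulVec_mulVec, hv, Matrix.mulVec_smul, hv]
      have hnz : w ≠ 0 := by
        intro h0
        have hb0 : h.eigenvectorBasis i = 0 := by
          ext x; exact congrFun h0 x
        have hnorm : ‖h.eigenvectorBasis i‖ = 1 := h.eigenvectorBasis.orthonormal.1 i
        rw [hb0] at hnorm
        simp at hnorm
      obtain ⟨x, hx⟩ := Function.ne_iff.mp hnz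
      have hxeq := congrFun (h2'.symm.trans h2) x
      simp only [Pi.smul_apply, Complex.real_smul, smul_eq_mul] at hxeq
      have hcancel : (((h.eigenvalues i : ℂ)) * (h.eigenvalues i) - (4:ℂ)⁻¹) * w x = 0 := by
        linear_combination hxeq
      rcases mul_eq_zero.mp hcancel with h' | h'
      · have hC : ((h.eigenvalues i : ℂ)) * (h.eigenvalues i) = (4:ℂ)⁻¹ := by
          linear_combination h'
        have hR : h.eigenvalues i * h.eigenvalues i = (4:ℝ)⁻¹ := by
          have : ((h.eigenvalues i * h.eigenvalues i : ℝ) : ℂ) = (((4:ℝ)⁻¹ : ℝ) : ℂ) := by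
            push_cast; exact hC
          exact_mod_cast this
        have : (h.eigenvalues i - 1/2) * (h.eigenvalues i + 1/2) = 0 := by nlinarith
        rcases mul_eq_zero.mp this with h'' | h''
        · exact Or.inl (by linarith)
        · exact Or.inr (by linarith)
      · exact absurd h' hx
    have hmax : ∀ i, max (-(h.eigenvalues i)) 0 = 1/4 - h.eigenvalues i / 2 := by
      intro i; rcases heig i with h' | h' <;> rw [h'] <;> norm_num
    calc ∑ i, max (-(h.eigenvalues i)) 0
        = ∑ i : Fin 2 × Fin 2, (1/4 - h.eigenvalues i / 2) :=
          Finset.sum_congr rfl (fun i _ => hmax i)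
      _ = 1/2 := by
          rw [Finset.sum_sub_distrib, Finset.sum_const, Finset.card_univ]
          have hdiv : ∑ i, h.eigenvalues i / 2 = 1/2 := by
            rw [← Finset.sum_div, hsum_e]
          rw [hdiv]
          norm_num [Fintype.card_prod]
end
end

section
/- Let x : Fin 9 → ℝ be real numbers whose power sums satisfy Σ_i x_i = 1, Σ_i x_i² = 1, Σ_i x_i³ = 1/9, Σ_i x_i⁴ = 1/9, Σ_i x_i⁵ = 1/81, Σ_i x_i⁶ = 1/81, Σ_i x_i⁷ = 1/729, Σ_i x_i⁸ = 1/729, and Σ_i x_i⁹ = 1/6561. Then the multiset {x_i : i ∈ Fin 9} consists of the value 1/3 with multiplicity 6 and the value −1/3 with multiplicity 3. -/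
open Matrix Polynomial
open scoped ComplexOrder

noncomputable section

theorem stmt15 (x : Fin 9 → ℝ)
    (h1 : ∑ i, x i = 1) (h2 : ∑ i, x i ^ 2 = 1)
    (h3 : ∑ i, x i ^ 3 = 1/9) (h4 : ∑ i, x i ^ 4 = 1/9)
    (h5 : ∑ i, x i ^ 5 = 1/81) (h6 : ∑ i, x i ^ 6 = 1/81)
    (h7 : ∑ i, x i ^ 7 = 1/729) (h8 : ∑ i, x i ^ 8 = 1/729)
    (h9 : ∑ i, x i ^ 9 = 1/6561) :
    Finset.univ.val.map x =
      Multiset.replicate 6 (1/3 : ℝ) + Multiset.replicate 3 (-(1/3) : ℝ) := by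
  classical
  have hsum0 : ∑ i, (x i ^ 2 - 1/9) ^ 2 = 0 := by
    have hexp : ∀ i ∈ Finset.univ, (x i ^ 2 - 1/9) ^ 2
        = x i ^ 4 - (2/9) * x i ^ 2 + 1/81 := by intro i _; ring
    rw [Finset.sum_congr rfl hexp, Finset.sum_add_distrib, Finset.sum_sub_distrib,
      ← Finset.mul_sum, h4, h2, Finset.sum_const]
    simp; norm_num
  have hsq : ∀ i, x i = 1/3 ∨ x i = -(1/3) := by
    intro i
    have h0 : (x i ^ 2 - 1/9) ^ 2 = 0 := by
      have := (Finset.sum_eq_zero_iff_of_nonneg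
        (fun i _ => sq_nonneg (x i ^ 2 - 1/9))).1 hsum0 i (Finset.mem_univ i)
      exact this
    have h1' : (x i - 1/3) * (x i + 1/3) = 0 := by nlinarith [sq_nonneg (x i ^ 2 - 1/9)]
    rcases mul_eq_zero.1 h1' with h | h
    · left; linarith
    · right; linarith
  set p : Fin 9 → Prop := fun i => x i = 1/3 with hp
  set S := Finset.univ.filter p with hS
  set T := Finset.univ.filter (fun i => ¬ p i) with hT
  have hTval : ∀ i ∈ T, x i = -(1/3) := by
    intro i hi
    rcases hsq i with h | h
    · exact absurd h (Finset.mem_filter.1 hi).2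
    · exact h
  have hSval : ∀ i ∈ S, x i = 1/3 := fun i hi => (Finset.mem_filter.1 hi).2
  have hcards : S.card + T.card = 9 := by
    rw [hS, hT]
    simpa using Finset.card_filter_add_card_filter_not
      (s := (Finset.univ : Finset (Fin 9))) (p := p)
  have hsumsplit : ∑ i, x i = (S.card : ℝ) * (1/3) + (T.card : ℝ) * (-(1/3)) := by
    rw [← Finset.sum_filter_add_sum_filter_not Finset.univ p x]
    rw [Finset.sum_congr rfl hSval, Finset.sum_congr rfl hTval,
      Finset.sum_const, Finset.sum_const]
    simp [mul_comm]
  have hScard : S.card = 6 := by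
    have h9 : (S.card : ℝ) + (T.card : ℝ) = 9 := by exact_mod_cast hcards
    have : (S.card : ℝ) = 6 := by
      rw [h1] at hsumsplit; linarith
    exact_mod_cast this
  have hTcard : T.card = 3 := by omega
  have hsplit : (Finset.univ : Finset (Fin 9)).val.map x = S.val.map x + T.val.map x := by
    rw [hS, hT, Finset.filter_val, Finset.filter_val, ← Multiset.map_add,
      Multiset.filter_add_not]
  rw [hsplit]
  congr 1
  · rw [Multiset.eq_replicate]
    constructor
    · rw [Multiset.card_map]; exact hScard
    · intro b hb
      rcases Multiset.mem_map.1 hb with ⟨i, hi, rfl⟩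
      exact hSval i hi
  · rw [Multiset.eq_replicate]
    constructor
    · rw [Multiset.card_map]; exact hTcard
    · intro b hb
      rcases Multiset.mem_map.1 hb with ⟨i, hi, rfl⟩
      exact hTval i hi
end
end
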